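/- arXiv:1604.00338 — 3 statements merged into one kernel-verified Lean document; each statement's English description precedes it below -/
import Mathlib

section
/- Let 𝓘 and 𝓚 be homogeneous families (multisets) of corteges for m,n, and let α : 𝓘 → ℤ and β : 𝓚 → ℤ. Define the reversal of a cortege S = (I|J, I'|J') to be S^rev := (I'|J', I|J), and let 𝓘^rev and 𝓚^rev be the families of reversed corteges of 𝓘 and 𝓚, with the functions −α and −β transferred along the reversal. If (𝓘, 𝓚, α, β) is q-balanced, then (𝓘^rev, 𝓚^rev, −α, −β) is q-balanced. -/
/-- A cortege `(I|J, I'|J')` for `m,n`. -/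
structure Cortege (m n : ℕ) where
  I : Finset ℕ
  J : Finset ℕ
  I' : Finset ℕ
  J' : Finset ℕ
  hIm : I ⊆ Finset.Icc 1 m
  hI'm : I' ⊆ Finset.Icc 1 m
  hJn : J ⊆ Finset.Icc 1 n
  hJ'n : J' ⊆ Finset.Icc 1 n
  hIJ : I.card = J.card
  hI'J' : I'.card = J'.card

/-- Elements of the ground set `Y^r ⊔ Y^c`: `Sum.inl i` is a row index, `Sum.inr j`
a column index. -/
abbrev Elt := ℕ ⊕ ℕ

/-- The linear order on `Y^r ⊔ Y^c`: rows in increasing order first, then columns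
in decreasing order. -/
def cLT : Elt → Elt → Prop
  | Sum.inl i, Sum.inl i' => i < i'
  | Sum.inl _, Sum.inr _ => True
  | Sum.inr _, Sum.inl _ => False
  | Sum.inr j, Sum.inr j' => j' < j

instance : DecidableRel cLT := fun a b =>
  match a, b with
  | Sum.inl i, Sum.inl i' => inferInstanceAs (Decidable (i < i'))
  | Sum.inl _, Sum.inr _ => inferInstanceAs (Decidable True)
  | Sum.inr _, Sum.inl _ => inferInstanceAs (Decidable False)
  | Sum.inr j, Sum.inr j' => inferInstanceAs (Decidable (j' < j))

/-- Two elements lie on the same side (both rows or both columns). -/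
abbrev sameSide (a b : Elt) : Prop := a.isLeft = b.isLeft

/-- The underlying numerical index of an element. -/
abbrev eVal : Elt → ℕ := Sum.elim id id

/-- The numerically smaller member of a couple (used for couples lying in one side). -/
def numMin (p : Elt × Elt) : Elt := if eVal p.1 ≤ eVal p.2 then p.1 else p.2

namespace Cortege
variable {m n : ℕ}

/-- White elements of the refinement: `I° = I - I'` (rows) and `J° = J - J'` (columns). -/
def whites (S : Cortege m n) : Finset Elt :=
  (S.I \ S.I').image Sum.inl ∪ (S.J \ S.J').image Sum.inr

/-- Black elements of the refinement: `I• = I' - I` (rows) and `J• = J' - J` (columns). -/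
def blacks (S : Cortege m n) : Finset Elt :=
  (S.I' \ S.I).image Sum.inl ∪ (S.J' \ S.J).image Sum.inr

/-- The ground set `Y^r ⊔ Y^c` of a cortege. -/
def ground (S : Cortege m n) : Finset Elt := S.whites ∪ S.blacks

end Cortege

/-- `M` is a feasible matching for the cortege `S`.  Couples are stored as pairs
`(a, b)` with `a` preceding `b` in the linear order `cLT`. -/
def IsFeasible {m n : ℕ} (S : Cortege m n) (M : Finset (Elt × Elt)) : Prop :=
  (∀ p ∈ M, p.1 ∈ S.ground ∧ p.2 ∈ S.ground ∧ cLT p.1 p.2) ∧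
  (∀ y ∈ S.ground, ∃! p, p ∈ M ∧ (p.1 = y ∨ p.2 = y)) ∧
  (∀ p ∈ M, (sameSide p.1 p.2 → (p.1 ∈ S.whites ↔ p.2 ∈ S.blacks)) ∧
            (¬ sameSide p.1 p.2 → (p.1 ∈ S.whites ↔ p.2 ∈ S.whites))) ∧
  (∀ p ∈ M, ∀ p' ∈ M, ¬ (cLT p.1 p'.1 ∧ cLT p'.1 p.2 ∧ cLT p.2 p'.2))

/-- The set of elements covered by a set of couples. -/
def coveredBy (Φ : Finset (Elt × Elt)) : Finset Elt :=
  Φ.image Prod.fst ∪ Φ.image Prod.snd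

/-- `T` is obtained from `S` by the index exchange operation using the couples `Φ`:
the intersections and unions of the row (resp. column) sets are unchanged, and
the white/black color is flipped exactly on the elements covered by `Φ`. -/
def IsExchange {m n : ℕ} (S T : Cortege m n) (Φ : Finset (Elt × Elt)) : Prop :=
  S.I ∩ S.I' = T.I ∩ T.I' ∧ S.J ∩ S.J' = T.J ∩ T.J' ∧
  S.I ∪ S.I' = T.I ∪ T.I' ∧ S.J ∪ S.J' = T.J ∪ T.J' ∧
  ∀ a ∈ S.ground,
    (a ∈ coveredBy Φ → (a ∈ S.whites ↔ a ∈ T.blacks)) ∧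
    (a ∉ coveredBy Φ → (a ∈ S.whites ↔ a ∈ T.whites))

/-- The couples of `M` on which the white/black colorings of `S` and `T` differ. -/
def differSet {m n : ℕ} (S T : Cortege m n) (M : Finset (Elt × Elt)) :
    Finset (Elt × Elt) :=
  M.filter (fun p =>
    ¬ (p.1 ∈ S.whites ↔ p.1 ∈ T.whites) ∨ ¬ (p.2 ∈ S.whites ↔ p.2 ∈ T.whites))

/-- `ζ°(S;Φ)`: the number of couples of `Φ` lying within one side whose numerically
smaller element is white. -/
def zetaWhite {m n : ℕ} (S : Cortege m n) (Φ : Finset (Elt × Elt)) : ℕ :=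
  (Φ.filter (fun p => sameSide p.1 p.2 ∧ numMin p ∈ S.whites)).card

/-- `ζ•(S;Φ)`: the number of couples of `Φ` lying within one side whose numerically
smaller element is black. -/
def zetaBlack {m n : ℕ} (S : Cortege m n) (Φ : Finset (Elt × Elt)) : ℕ :=
  (Φ.filter (fun p => sameSide p.1 p.2 ∧ numMin p ∈ S.blacks)).card

/-- Configurations for an (indexed) family of corteges: pairs of a member of the family
and a feasible matching for it. -/
def Config {m n : ℕ} {ι : Type} (F : ι → Cortege m n) : Type :=
  {p : ι × Finset (Elt × Elt) // IsFeasible (F p.1) p.2}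

/-- The quadruple `(F, G, α, β)` is `q`-balanced. -/
def QBalanced {m n : ℕ} {ι κ : Type} (F : ι → Cortege m n) (G : κ → Cortege m n)
    (α : ι → ℤ) (β : κ → ℤ) : Prop :=
  ∃ γ : Config F ≃ Config G, ∀ c : Config F,
    ((γ c).1.2 = c.1.2) ∧
    IsExchange (F c.1.1) (G (γ c).1.1) (differSet (F c.1.1) (G (γ c).1.1) c.1.2) ∧
    β (γ c).1.1 - α c.1.1 =
      (zetaWhite (F c.1.1) (differSet (F c.1.1) (G (γ c).1.1) c.1.2) : ℤ) -
      (zetaBlack (F c.1.1) (differSet (F c.1.1) (G (γ c).1.1) c.1.2) : ℤ)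

/-- The two families `F`, `G` are (jointly) homogeneous. -/
def Homogeneous {m n : ℕ} {ι κ : Type} (F : ι → Cortege m n) (G : κ → Cortege m n) : Prop :=
  ∀ S T : Cortege m n,
    ((∃ i, F i = S) ∨ (∃ k, G k = S)) → ((∃ i, F i = T) ∨ (∃ k, G k = T)) →
    S.I ∪ S.I' = T.I ∪ T.I' ∧ S.I ∩ S.I' = T.I ∩ T.I' ∧
    S.J ∪ S.J' = T.J ∪ T.J' ∧ S.J ∩ S.J' = T.J ∩ T.J'

/-- The cortege reversed to `S`. -/
def Cortege.rev {m n : ℕ} (S : Cortege m n) : Cortege m n :=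
  ⟨S.I', S.J', S.I, S.J, S.hI'm, S.hIm, S.hJ'n, S.hJn, S.hI'J', S.hIJ⟩

section Aux
variable {m n : ℕ}

lemma Cortege.whites_rev (S : Cortege m n) : S.rev.whites = S.blacks := rfl
lemma Cortege.blacks_rev (S : Cortege m n) : S.rev.blacks = S.whites := rfl
lemma Cortege.ground_rev (S : Cortege m n) : S.rev.ground = S.ground :=
  Finset.union_comm _ _

lemma Cortege.inl_mem_whites {S : Cortege m n} {i : ℕ} :
    Sum.inl i ∈ S.whites ↔ (i ∈ S.I ∧ i ∉ S.I') := by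
  simp [Cortege.whites]

lemma Cortege.inr_mem_whites {S : Cortege m n} {j : ℕ} :
    Sum.inr j ∈ S.whites ↔ (j ∈ S.J ∧ j ∉ S.J') := by
  simp [Cortege.whites]

lemma Cortege.inl_mem_blacks {S : Cortege m n} {i : ℕ} :
    Sum.inl i ∈ S.blacks ↔ (i ∈ S.I' ∧ i ∉ S.I) := by
  simp [Cortege.blacks]

lemma Cortege.inr_mem_blacks {S : Cortege m n} {j : ℕ} :
    Sum.inr j ∈ S.blacks ↔ (j ∈ S.J' ∧ j ∉ S.J) := by
  simp [Cortege.blacks]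

lemma Cortege.mem_whites_iff {S : Cortege m n} {a : Elt} (ha : a ∈ S.ground) :
    a ∈ S.whites ↔ a ∉ S.blacks := by
  rcases a with i | j <;>
    simp only [Cortege.ground, Finset.mem_union, Cortege.inl_mem_whites,
      Cortege.inl_mem_blacks, Cortege.inr_mem_whites, Cortege.inr_mem_blacks] at ha ⊢ <;>
    tauto

lemma Cortege.ground_eq {S T : Cortege m n}
    (h1 : S.I ∪ S.I' = T.I ∪ T.I') (h2 : S.I ∩ S.I' = T.I ∩ T.I')
    (h3 : S.J ∪ S.J' = T.J ∪ T.J') (h4 : S.J ∩ S.J' = T.J ∩ T.J') :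
    S.ground = T.ground := by
  have key : ∀ (A A' B B' : Finset ℕ), A ∪ A' = B ∪ B' → A ∩ A' = B ∩ B' →
      ∀ x : ℕ, ((x ∈ A ∧ x ∉ A') ∨ (x ∈ A' ∧ x ∉ A)) ↔
        ((x ∈ B ∧ x ∉ B') ∨ (x ∈ B' ∧ x ∉ B)) := by
    intro A A' B B' hu hi x
    have hu' : x ∈ A ∨ x ∈ A' ↔ x ∈ B ∨ x ∈ B' := by
      rw [← Finset.mem_union, ← Finset.mem_union, hu]
    have hi' : x ∈ A ∧ x ∈ A' ↔ x ∈ B ∧ x ∈ B' := by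
      rw [← Finset.mem_inter, ← Finset.mem_inter, hi]
    tauto
  ext a
  rcases a with i | j <;>
    simp only [Cortege.ground, Finset.mem_union, Cortege.inl_mem_whites,
      Cortege.inl_mem_blacks, Cortege.inr_mem_whites, Cortege.inr_mem_blacks]
  · exact key _ _ _ _ h1 h2 i
  · exact key _ _ _ _ h3 h4 j

lemma isFeasible_rev {S : Cortege m n} {M : Finset (Elt × Elt)}
    (h : IsFeasible S M) : IsFeasible S.rev M := by
  obtain ⟨h1, h2, h3, h4⟩ := h
  refine ⟨?_, ?_, ?_, h4⟩
  · simpa [Cortege.ground_rev] using h1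
  · simpa [Cortege.ground_rev] using h2
  · intro p hp
    obtain ⟨hp1, hp2, -⟩ := h1 p hp
    have e1 := Cortege.mem_whites_iff hp1
    have e2 := Cortege.mem_whites_iff hp2
    obtain ⟨c1, c2⟩ := h3 p hp
    rw [Cortege.whites_rev, Cortege.blacks_rev]
    constructor
    · intro hss
      exact (iff_not_comm.mp e1).trans ((not_congr (c1 hss)).trans e2.symm)
    · intro hss
      exact (iff_not_comm.mp e1).trans
        ((not_congr (c2 hss)).trans (iff_not_comm.mp e2).symm)

lemma differSet_rev {S T : Cortege m n} {M : Finset (Elt × Elt)}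
    (hM : ∀ p ∈ M, p.1 ∈ S.ground ∧ p.2 ∈ S.ground)
    (hg : S.ground = T.ground) :
    differSet S.rev T.rev M = differSet S T M := by
  unfold differSet
  apply Finset.filter_congr
  intro p hp
  obtain ⟨hp1, hp2⟩ := hM p hp
  have a1 : p.1 ∈ S.rev.whites ↔ ¬(p.1 ∈ S.whites) := by
    rw [Cortege.whites_rev]; exact iff_not_comm.mp (Cortege.mem_whites_iff hp1)
  have a2 : p.1 ∈ T.rev.whites ↔ ¬(p.1 ∈ T.whites) := by
    rw [Cortege.whites_rev]; exact iff_not_comm.mp (Cortege.mem_whites_iff (hg ▸ hp1))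
  have b1 : p.2 ∈ S.rev.whites ↔ ¬(p.2 ∈ S.whites) := by
    rw [Cortege.whites_rev]; exact iff_not_comm.mp (Cortege.mem_whites_iff hp2)
  have b2 : p.2 ∈ T.rev.whites ↔ ¬(p.2 ∈ T.whites) := by
    rw [Cortege.whites_rev]; exact iff_not_comm.mp (Cortege.mem_whites_iff (hg ▸ hp2))
  exact or_congr
    ((not_congr (iff_congr a1 a2)).trans (not_congr not_iff_not))
    ((not_congr (iff_congr b1 b2)).trans (not_congr not_iff_not))

lemma isExchange_rev {S T : Cortege m n} {Φ : Finset (Elt × Elt)}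
    (hex : IsExchange S T Φ) (hg : S.ground = T.ground) :
    IsExchange S.rev T.rev Φ := by
  obtain ⟨e1, e2, e3, e4, e5⟩ := hex
  refine ⟨?_, ?_, ?_, ?_, ?_⟩
  · show S.I' ∩ S.I = T.I' ∩ T.I
    rw [Finset.inter_comm, Finset.inter_comm T.I']; exact e1
  · show S.J' ∩ S.J = T.J' ∩ T.J
    rw [Finset.inter_comm, Finset.inter_comm T.J']; exact e2
  · show S.I' ∪ S.I = T.I' ∪ T.I
    rw [Finset.union_comm, Finset.union_comm T.I']; exact e3
  · show S.J' ∪ S.J = T.J' ∪ T.J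
    rw [Finset.union_comm, Finset.union_comm T.J']; exact e4
  · intro a ha
    rw [Cortege.ground_rev] at ha
    have e6 := Cortege.mem_whites_iff ha
    have e7 := Cortege.mem_whites_iff (hg ▸ ha)
    obtain ⟨c1, c2⟩ := e5 a ha
    rw [Cortege.whites_rev, Cortege.blacks_rev, Cortege.whites_rev]
    constructor
    · intro hc
      exact (iff_not_comm.mp e6).trans ((not_congr (c1 hc)).trans e7.symm)
    · intro hc
      exact (iff_not_comm.mp e6).trans
        ((not_congr (c2 hc)).trans (iff_not_comm.mp e7).symm)

lemma zetaWhite_rev (S : Cortege m n) (Φ : Finset (Elt × Elt)) :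
    zetaWhite S.rev Φ = zetaBlack S Φ := by
  unfold zetaWhite zetaBlack
  congr 1

lemma zetaBlack_rev (S : Cortege m n) (Φ : Finset (Elt × Elt)) :
    zetaBlack S.rev Φ = zetaWhite S Φ := by
  unfold zetaWhite zetaBlack
  congr 1

/-- Identification of configurations of the reversed family with the original. -/
lemma Cortege.rev_rev (S : Cortege m n) : S.rev.rev = S := rfl

lemma isFeasible_of_rev {S : Cortege m n} {M : Finset (Elt × Elt)}
    (h : IsFeasible S.rev M) : IsFeasible S M := by
  have := isFeasible_rev h
  rwa [Cortege.rev_rev] at this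

def configRevEquiv {ι : Type} (F : ι → Cortege m n) :
    Config (fun i => (F i).rev) ≃ Config F where
  toFun c := ⟨c.1, isFeasible_of_rev c.2⟩
  invFun c := ⟨c.1, isFeasible_rev c.2⟩
  left_inv c := rfl
  right_inv c := rfl

end Aux

/-- Reversing all corteges and negating `α, β` preserves `q`-balancedness. -/
theorem qBalanced_rev
    {m n : ℕ} {ι κ : Type} (F : ι → Cortege m n) (G : κ → Cortege m n)
    (hhom : Homogeneous F G) (α : ι → ℤ) (β : κ → ℤ)
    (hbal : QBalanced F G α β) :
    QBalanced (fun i => (F i).rev) (fun k => (G k).rev)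
      (fun i => -(α i)) (fun k => -(β k)) := by
  obtain ⟨γ, hγ⟩ := hbal
  refine ⟨(configRevEquiv F).trans (γ.trans (configRevEquiv G).symm), ?_⟩
  intro c
  set d := γ ((configRevEquiv F) c) with hd
  obtain ⟨hM, hex, hval⟩ := hγ ((configRevEquiv F) c)
  rw [← hd] at hM hex hval
  have hM' : d.1.2 = c.1.2 := hM
  have hfeas : IsFeasible (F c.1.1) c.1.2 := ((configRevEquiv F) c).2
  have hMg : ∀ p ∈ c.1.2, p.1 ∈ (F c.1.1).ground ∧ p.2 ∈ (F c.1.1).ground :=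
    fun p hp => ⟨(hfeas.1 p hp).1, (hfeas.1 p hp).2.1⟩
  have hhom' := hhom (F c.1.1) (G d.1.1) (Or.inl ⟨c.1.1, rfl⟩) (Or.inr ⟨d.1.1, rfl⟩)
  have hg : (F c.1.1).ground = (G d.1.1).ground :=
    Cortege.ground_eq hhom'.1 hhom'.2.1 hhom'.2.2.1 hhom'.2.2.2
  have hΦ : differSet (F c.1.1).rev (G d.1.1).rev c.1.2 =
      differSet (F c.1.1) (G d.1.1) c.1.2 := differSet_rev hMg hg
  have hex' : IsExchange (F c.1.1) (G d.1.1)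
      (differSet (F c.1.1) (G d.1.1) c.1.2) := hex
  have hval' : β d.1.1 - α c.1.1 =
      (zetaWhite (F c.1.1) (differSet (F c.1.1) (G d.1.1) c.1.2) : ℤ) -
      (zetaBlack (F c.1.1) (differSet (F c.1.1) (G d.1.1) c.1.2) : ℤ) := hval
  refine ⟨hM', ?_, ?_⟩
  · show IsExchange (F c.1.1).rev (G d.1.1).rev
      (differSet (F c.1.1).rev (G d.1.1).rev c.1.2)
    rw [hΦ]
    exact isExchange_rev hex' hg
  · show -β d.1.1 - -α c.1.1 =
      (zetaWhite (F c.1.1).rev (differSet (F c.1.1).rev (G d.1.1).rev c.1.2) : ℤ) -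
      (zetaBlack (F c.1.1).rev (differSet (F c.1.1).rev (G d.1.1).rev c.1.2) : ℤ)
    rw [hΦ, zetaWhite_rev, zetaBlack_rev]
    linarith
end

section
/- Let 𝓘 and 𝓚 be homogeneous families (multisets) of corteges for m,n, and let α : 𝓘 → ℤ and β : 𝓚 → ℤ. Define the transpose of a cortege S = (I|J, I'|J') (for m,n) to be S^⊤ := (J|I, J'|I'), which is a cortege for n,m, and let 𝓘^⊤ and 𝓚^⊤ be the families of transposed corteges, with α and β transferred along the transposition. If (𝓘, 𝓚, α, β) is q-balanced, then (𝓘^⊤, 𝓚^⊤, α, β) is q-balanced. -/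
/-- The cortege transposed to `S`. -/
def Cortege.transpose {m n : ℕ} (S : Cortege m n) : Cortege n m :=
  ⟨S.J, S.I, S.J', S.I', S.hJn, S.hJ'n, S.hIm, S.hI'm, S.hIJ.symm, S.hI'J'.symm⟩

namespace QBT

open Finset

/-- The couple transposition: swap sides and reverse the pair. -/
def e (p : Elt × Elt) : Elt × Elt := (p.2.swap, p.1.swap)

lemma e_e (p : Elt × Elt) : e (e p) = p := by
  cases p with
  | mk a b => simp [e]

lemma e_inj : Function.Injective e := Function.LeftInverse.injective e_e

/-- Transposition of a set of couples. -/
def Mmap (M : Finset (Elt × Elt)) : Finset (Elt × Elt) := M.image e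

lemma Mmap_Mmap (M : Finset (Elt × Elt)) : Mmap (Mmap M) = M := by
  rw [Mmap, Mmap, Finset.image_image]
  have : e ∘ e = id := funext e_e
  rw [this, Finset.image_id]

lemma cLT_swap (a b : Elt) : cLT a.swap b.swap ↔ cLT b a := by
  cases a <;> cases b <;> simp [cLT, Sum.swap]

lemma sameSide_swap (a b : Elt) : sameSide a.swap b.swap ↔ sameSide a b := by
  cases a <;> cases b <;> simp [sameSide, Sum.swap]

variable {m n : ℕ}

lemma mem_whites_transpose {S : Cortege m n} {a : Elt} :
    a ∈ S.transpose.whites ↔ a.swap ∈ S.whites := by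
  cases a <;> simp [Cortege.whites, Cortege.transpose, Sum.swap]

lemma mem_blacks_transpose {S : Cortege m n} {a : Elt} :
    a ∈ S.transpose.blacks ↔ a.swap ∈ S.blacks := by
  cases a <;> simp [Cortege.blacks, Cortege.transpose, Sum.swap]

lemma mem_ground_transpose {S : Cortege m n} {a : Elt} :
    a ∈ S.transpose.ground ↔ a.swap ∈ S.ground := by
  simp [Cortege.ground, mem_whites_transpose, mem_blacks_transpose]

lemma mem_whites_inl {S : Cortege m n} {i : ℕ} :
    Sum.inl i ∈ S.whites ↔ i ∈ S.I \ S.I' := by simp [Cortege.whites]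

lemma mem_whites_inr {S : Cortege m n} {j : ℕ} :
    Sum.inr j ∈ S.whites ↔ j ∈ S.J \ S.J' := by simp [Cortege.whites]

lemma mem_blacks_inl {S : Cortege m n} {i : ℕ} :
    Sum.inl i ∈ S.blacks ↔ i ∈ S.I' \ S.I := by simp [Cortege.blacks]

lemma mem_blacks_inr {S : Cortege m n} {j : ℕ} :
    Sum.inr j ∈ S.blacks ↔ j ∈ S.J' \ S.J := by simp [Cortege.blacks]

lemma black_iff_not_white {S : Cortege m n} {a : Elt} (ha : a ∈ S.ground) :
    a ∈ S.blacks ↔ a ∉ S.whites := by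
  rw [Cortege.ground, Finset.mem_union] at ha
  cases a with
  | inl i =>
      rw [mem_whites_inl, mem_blacks_inl]
      rw [mem_whites_inl, mem_blacks_inl] at ha
      simp only [Finset.mem_sdiff] at ha ⊢
      tauto
  | inr j =>
      rw [mem_whites_inr, mem_blacks_inr]
      rw [mem_whites_inr, mem_blacks_inr] at ha
      simp only [Finset.mem_sdiff] at ha ⊢
      tauto

lemma mem_coveredBy {Φ : Finset (Elt × Elt)} {a : Elt} :
    a ∈ coveredBy Φ ↔ ∃ p ∈ Φ, p.1 = a ∨ p.2 = a := by
  simp only [coveredBy, Finset.mem_union, Finset.mem_image]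
  constructor
  · rintro (⟨p, hp, h⟩ | ⟨p, hp, h⟩) <;> exact ⟨p, hp, by tauto⟩
  · rintro ⟨p, hp, h | h⟩
    · exact Or.inl ⟨p, hp, h⟩
    · exact Or.inr ⟨p, hp, h⟩

lemma swap_eq_iff {a b : Elt} : a.swap = b ↔ a = b.swap := by
  constructor
  · rintro rfl; simp
  · rintro rfl; simp

lemma coveredBy_Mmap {Φ : Finset (Elt × Elt)} {a : Elt} :
    a ∈ coveredBy (Mmap Φ) ↔ a.swap ∈ coveredBy Φ := by
  rw [mem_coveredBy, mem_coveredBy]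
  constructor
  · rintro ⟨p, hp, h⟩
    obtain ⟨q, hq, rfl⟩ := Finset.mem_image.mp hp
    refine ⟨q, hq, ?_⟩
    rcases h with h | h
    · right; rw [show (e q).1 = q.2.swap from rfl] at h
      rw [swap_eq_iff] at h; exact h
    · left; rw [show (e q).2 = q.1.swap from rfl] at h
      rw [swap_eq_iff] at h; exact h
  · rintro ⟨q, hq, h⟩
    refine ⟨e q, Finset.mem_image_of_mem e hq, ?_⟩
    rcases h with h | h
    · right; show q.1.swap = a; rw [h]; simp
    · left; show q.2.swap = a; rw [h]; simp

lemma numMin_e {p : Elt × Elt} (hs : sameSide p.1 p.2) (hlt : cLT p.1 p.2) :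
    numMin (e p) = (numMin p).swap := by
  obtain ⟨a, b⟩ := p
  cases a with
  | inl i =>
    cases b with
    | inl i' =>
        have h : i < i' := hlt
        show (if eVal (Sum.inr i' : Elt) ≤ eVal (Sum.inr i : Elt) then
            (Sum.inr i' : Elt) else Sum.inr i) =
          (if eVal (Sum.inl i : Elt) ≤ eVal (Sum.inl i' : Elt) then
            (Sum.inl i : Elt) else Sum.inl i').swap
        simp only [eVal, Sum.elim_inl, Sum.elim_inr, id]
        simp only [show ¬ (i' ≤ i) by omega, show i ≤ i' by omega, if_true, if_false]
        rfl
    | inr _ => exact absurd hs (by simp [sameSide])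
  | inr j =>
    cases b with
    | inl _ => exact absurd hs (by simp [sameSide])
    | inr j' =>
        have h : j' < j := hlt
        show (if eVal (Sum.inl j' : Elt) ≤ eVal (Sum.inl j : Elt) then
            (Sum.inl j' : Elt) else Sum.inl j) =
          (if eVal (Sum.inr j : Elt) ≤ eVal (Sum.inr j' : Elt) then
            (Sum.inr j : Elt) else Sum.inr j').swap
        simp only [eVal, Sum.elim_inl, Sum.elim_inr, id]
        simp only [show j' ≤ j by omega, show ¬ (j ≤ j') by omega, if_true, if_false]
        rfl

lemma feasible_transpose {S : Cortege m n} {M : Finset (Elt × Elt)}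
    (h : IsFeasible S M) : IsFeasible S.transpose (Mmap M) := by
  obtain ⟨h1, h2, h3, h4⟩ := h
  refine ⟨?_, ?_, ?_, ?_⟩
  · intro p hp
    obtain ⟨q, hq, rfl⟩ := Finset.mem_image.mp hp
    obtain ⟨hg1, hg2, hlt⟩ := h1 q hq
    refine ⟨mem_ground_transpose.mpr (by simpa [e] using hg2),
            mem_ground_transpose.mpr (by simpa [e] using hg1), ?_⟩
    show cLT q.2.swap q.1.swap
    rw [cLT_swap]; exact hlt
  · intro y hy
    obtain ⟨q, ⟨hqM, hqy⟩, huq⟩ := h2 y.swap (mem_ground_transpose.mp hy)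
    refine ⟨e q, ⟨Finset.mem_image_of_mem e hqM, ?_⟩, ?_⟩
    · rcases hqy with h' | h'
      · right; show q.1.swap = y; rw [h']; simp
      · left; show q.2.swap = y; rw [h']; simp
    · rintro p ⟨hpM, hpy⟩
      obtain ⟨q', hq', rfl⟩ := Finset.mem_image.mp hpM
      have hq'q : q' = q := by
        apply huq
        refine ⟨hq', ?_⟩
        rcases hpy with h' | h'
        · right; rw [show (e q').1 = q'.2.swap from rfl, swap_eq_iff] at h'; exact h'
        · left; rw [show (e q').2 = q'.1.swap from rfl, swap_eq_iff] at h'; exact h'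
      rw [hq'q]
  · intro p hp
    obtain ⟨q, hq, rfl⟩ := Finset.mem_image.mp hp
    obtain ⟨hc1, hc2⟩ := h3 q hq
    obtain ⟨hg1, hg2, _⟩ := h1 q hq
    have hside : sameSide (e q).1 (e q).2 ↔ sameSide q.1 q.2 := by
      rw [show (e q).1 = q.2.swap from rfl, show (e q).2 = q.1.swap from rfl,
        sameSide_swap]
      exact eq_comm
    constructor
    · intro hs
      have hs' : sameSide q.1 q.2 := hside.mp hs
      have horig := hc1 hs'
      show (e q).1 ∈ S.transpose.whites ↔ (e q).2 ∈ S.transpose.blacks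
      rw [mem_whites_transpose, mem_blacks_transpose,
        show (e q).1.swap = q.2 by simp [e], show (e q).2.swap = q.1 by simp [e]]
      rw [black_iff_not_white hg1]
      rw [black_iff_not_white hg2] at horig
      tauto
    · intro hs
      have hs' : ¬ sameSide q.1 q.2 := fun h' => hs (hside.mpr h')
      have horig := hc2 hs'
      show (e q).1 ∈ S.transpose.whites ↔ (e q).2 ∈ S.transpose.whites
      rw [mem_whites_transpose, mem_whites_transpose,
        show (e q).1.swap = q.2 by simp [e], show (e q).2.swap = q.1 by simp [e]]
      tauto
  · intro p hp p' hp'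
    obtain ⟨q, hq, rfl⟩ := Finset.mem_image.mp hp
    obtain ⟨q', hq', rfl⟩ := Finset.mem_image.mp hp'
    have horig := h4 q' hq' q hq
    rintro ⟨ha, hb, hc⟩
    rw [show (e q).1 = q.2.swap from rfl, show (e q').1 = q'.2.swap from rfl,
      cLT_swap] at ha
    rw [show (e q').1 = q'.2.swap from rfl, show (e q).2 = q.1.swap from rfl,
      cLT_swap] at hb
    rw [show (e q).2 = q.1.swap from rfl, show (e q').2 = q'.1.swap from rfl,
      cLT_swap] at hc
    exact horig ⟨hc, hb, ha⟩

lemma differSet_transpose_aux {S T : Cortege m n} (N : Finset (Elt × Elt)) :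
    differSet S.transpose T.transpose (Mmap N) = Mmap (differSet S T N) := by
  unfold differSet Mmap
  rw [Finset.filter_image]
  congr 1
  apply Finset.filter_congr
  intro q _
  rw [show (e q).1 = q.2.swap from rfl, show (e q).2 = q.1.swap from rfl]
  simp only [mem_whites_transpose, Sum.swap_swap]
  tauto

lemma differSet_transpose {S T : Cortege m n} (M : Finset (Elt × Elt)) :
    differSet S.transpose T.transpose M = Mmap (differSet S T (Mmap M)) := by
  conv_lhs => rw [← Mmap_Mmap M]
  exact differSet_transpose_aux (Mmap M)

lemma isExchange_transpose {S T : Cortege m n} {Φ : Finset (Elt × Elt)}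
    (h : IsExchange S T Φ) : IsExchange S.transpose T.transpose (Mmap Φ) := by
  obtain ⟨h1, h2, h3, h4, h5⟩ := h
  refine ⟨h2, h1, h4, h3, ?_⟩
  intro a ha
  obtain ⟨hc1, hc2⟩ := h5 a.swap (mem_ground_transpose.mp ha)
  constructor
  · intro hcov
    rw [mem_whites_transpose, mem_blacks_transpose]
    exact hc1 (coveredBy_Mmap.mp hcov)
  · intro hcov
    rw [mem_whites_transpose, mem_whites_transpose]
    exact hc2 (fun hc => hcov (coveredBy_Mmap.mpr hc))

lemma zetaWhite_Mmap {S : Cortege m n} {Φ : Finset (Elt × Elt)}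
    (hΦ : ∀ p ∈ Φ, cLT p.1 p.2) :
    zetaWhite S.transpose (Mmap Φ) = zetaWhite S Φ := by
  unfold zetaWhite Mmap
  rw [Finset.filter_image, Finset.card_image_of_injective _ e_inj]
  congr 1
  apply Finset.filter_congr
  intro q hq
  have hside : sameSide (e q).1 (e q).2 ↔ sameSide q.1 q.2 := by
    rw [show (e q).1 = q.2.swap from rfl, show (e q).2 = q.1.swap from rfl,
      sameSide_swap]
    exact eq_comm
  constructor
  · rintro ⟨hs, hw⟩
    have hs' := hside.mp hs
    refine ⟨hs', ?_⟩
    rw [numMin_e hs' (hΦ q hq), mem_whites_transpose, Sum.swap_swap] at hw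
    exact hw
  · rintro ⟨hs, hw⟩
    refine ⟨hside.mpr hs, ?_⟩
    rw [numMin_e hs (hΦ q hq), mem_whites_transpose, Sum.swap_swap]
    exact hw

lemma zetaBlack_Mmap {S : Cortege m n} {Φ : Finset (Elt × Elt)}
    (hΦ : ∀ p ∈ Φ, cLT p.1 p.2) :
    zetaBlack S.transpose (Mmap Φ) = zetaBlack S Φ := by
  unfold zetaBlack Mmap
  rw [Finset.filter_image, Finset.card_image_of_injective _ e_inj]
  congr 1
  apply Finset.filter_congr
  intro q hq
  have hside : sameSide (e q).1 (e q).2 ↔ sameSide q.1 q.2 := by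
    rw [show (e q).1 = q.2.swap from rfl, show (e q).2 = q.1.swap from rfl,
      sameSide_swap]
    exact eq_comm
  constructor
  · rintro ⟨hs, hw⟩
    have hs' := hside.mp hs
    refine ⟨hs', ?_⟩
    rw [numMin_e hs' (hΦ q hq), mem_blacks_transpose, Sum.swap_swap] at hw
    exact hw
  · rintro ⟨hs, hw⟩
    refine ⟨hside.mpr hs, ?_⟩
    rw [numMin_e hs (hΦ q hq), mem_blacks_transpose, Sum.swap_swap]
    exact hw

lemma transpose_transpose (S : Cortege m n) : S.transpose.transpose = S := rfl

/-- The equivalence between configurations of a transposed family and of the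
original family. -/
def trEquiv {ι : Type} (F : ι → Cortege m n) :
    Config (fun i => (F i).transpose) ≃ Config F where
  toFun c := ⟨(c.1.1, Mmap c.1.2), by
    have h := feasible_transpose (S := (F c.1.1).transpose) c.2
    rwa [transpose_transpose] at h⟩
  invFun c := ⟨(c.1.1, Mmap c.1.2), feasible_transpose c.2⟩
  left_inv c := by
    apply Subtype.ext
    show (c.1.1, Mmap (Mmap c.1.2)) = c.1
    rw [Mmap_Mmap]
  right_inv c := by
    apply Subtype.ext
    show (c.1.1, Mmap (Mmap c.1.2)) = c.1
    rw [Mmap_Mmap]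

end QBT

/-- Transposing all corteges preserves `q`-balancedness. -/
theorem qBalanced_transpose
    {m n : ℕ} {ι κ : Type} (F : ι → Cortege m n) (G : κ → Cortege m n)
    (hhom : Homogeneous F G) (α : ι → ℤ) (β : κ → ℤ)
    (hbal : QBalanced F G α β) :
    QBalanced (fun i => (F i).transpose) (fun k => (G k).transpose) α β := by
  classical
  obtain ⟨γ, hγ⟩ := hbal
  refine ⟨(QBT.trEquiv F).trans (γ.trans (QBT.trEquiv G).symm), ?_⟩
  intro c
  set c₀ : Config F := QBT.trEquiv F c with hc₀
  obtain ⟨hM, hex, hz⟩ := hγ c₀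
  have hc₀1 : c₀.1.1 = c.1.1 := rfl
  have hc₀2 : c₀.1.2 = QBT.Mmap c.1.2 := rfl
  -- the image configuration
  have hγ'c : ((QBT.trEquiv F).trans (γ.trans (QBT.trEquiv G).symm)) c =
      ⟨((γ c₀).1.1, QBT.Mmap (γ c₀).1.2), QBT.feasible_transpose (γ c₀).2⟩ := rfl
  rw [hγ'c]
  have hfeas : IsFeasible (F c.1.1) (QBT.Mmap c.1.2) := c₀.2
  have hΦ : ∀ p ∈ differSet (F c.1.1) (G (γ c₀).1.1) (QBT.Mmap c.1.2),
      cLT p.1 p.2 := by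
    intro p hp
    exact (hfeas.1 p (Finset.mem_filter.mp hp).1).2.2
  have hdiff : differSet ((F c.1.1).transpose) ((G (γ c₀).1.1).transpose) c.1.2 =
      QBT.Mmap (differSet (F c.1.1) (G (γ c₀).1.1) (QBT.Mmap c.1.2)) :=
    QBT.differSet_transpose c.1.2
  refine ⟨?_, ?_, ?_⟩
  · show QBT.Mmap (γ c₀).1.2 = c.1.2
    rw [hM, hc₀2, QBT.Mmap_Mmap]
  · show IsExchange ((F c.1.1).transpose) ((G (γ c₀).1.1).transpose)
      (differSet ((F c.1.1).transpose) ((G (γ c₀).1.1).transpose) c.1.2)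
    rw [hdiff]
    apply QBT.isExchange_transpose
    rw [hc₀1, hc₀2] at hex
    exact hex
  · show β (γ c₀).1.1 - α c.1.1 =
      (zetaWhite ((F c.1.1).transpose)
        (differSet ((F c.1.1).transpose) ((G (γ c₀).1.1).transpose) c.1.2) : ℤ) -
      (zetaBlack ((F c.1.1).transpose)
        (differSet ((F c.1.1).transpose) ((G (γ c₀).1.1).transpose) c.1.2) : ℤ)
    rw [hdiff, QBT.zetaWhite_Mmap hΦ, QBT.zetaBlack_Mmap hΦ]
    rw [hc₀1, hc₀2] at hz
    exact hz
end

section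
/- Let I, J ⊆ {1,…,n} with |I| ≥ |J|, suppose I and J are not weakly separated, and let m ≥ |I|. Let S be the cortege (A|I, B|J) for m,n, where A = {1,…,|I|} and B = {1,…,|J|}. Then there exist feasible matchings M and M' for S such that ζ°(S;M) − ζ•(S;M) ≠ ζ°(S;M') − ζ•(S;M'). -/
/-- `X < Y` elementwise: every element of `X` is smaller than every element of `Y`. -/
def finsetLT (X Y : Finset ℕ) : Prop := ∀ a ∈ X, ∀ b ∈ Y, a < b

/-- One-sided weak separation: `|I| ≥ |J|` and `J - I` has a partition `J₁ ∪ J₂`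
with `J₁ < I - J < J₂`. -/
def WShalf (I J : Finset ℕ) : Prop :=
  J.card ≤ I.card ∧ ∃ J₁ J₂ : Finset ℕ, Disjoint J₁ J₂ ∧ J₁ ∪ J₂ = J \ I ∧
    finsetLT J₁ (I \ J) ∧ finsetLT (I \ J) J₂

/-- `I` and `J` are weakly separated. -/
def WeaklySeparated (I J : Finset ℕ) : Prop := WShalf I J ∨ WShalf J I

/-- `Inv(A,B)`: the number of pairs `(a,b) ∈ A × B` with `a > b`. -/
def invPairs (A B : Finset ℕ) : ℕ := ((A ×ˢ B).filter (fun p => p.2 < p.1)).card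

/-- The flag cortege `(A|I, B|J)` with `A = {1,…,|I|}` and `B = {1,…,|J|}`. -/
def flagCortege (m n : ℕ) (I J : Finset ℕ)
    (hIn : I ⊆ Finset.Icc 1 n) (hJn : J ⊆ Finset.Icc 1 n)
    (hJI : J.card ≤ I.card) (hm : I.card ≤ m) : Cortege m n :=
  ⟨Finset.Icc 1 I.card, I, Finset.Icc 1 J.card, J,
    Finset.Icc_subset_Icc le_rfl hm,
    Finset.Icc_subset_Icc le_rfl (le_trans hJI hm),
    hIn, hJn, by simp, by simp⟩

namespace NC
open Finset

/-- Signed count of arcs: +1 when the smaller endpoint is white, -1 when black. -/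
def zetaA (Wst : Finset ℕ) (Φ : Finset (ℕ × ℕ)) : ℤ :=
  ((Φ.filter fun p => p.1 ∈ Wst).card : ℤ) - ((Φ.filter fun p => p.1 ∉ Wst).card : ℤ)

/-- A feasible arc system on a bicolored point set: arcs are bicolored,
pairwise disjoint, cover all blacks, are noncrossing, and no uncovered white
lies strictly under an arc. -/
structure Feas (Wst Bst : Finset ℕ) (Φ : Finset (ℕ × ℕ)) : Prop where
  lt : ∀ p ∈ Φ, p.1 < p.2
  colors : ∀ p ∈ Φ, (p.1 ∈ Wst ∧ p.2 ∈ Bst) ∨ (p.1 ∈ Bst ∧ p.2 ∈ Wst)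
  coverB : ∀ b ∈ Bst, ∃ p ∈ Φ, p.1 = b ∨ p.2 = b
  pdisj : ∀ p ∈ Φ, ∀ q ∈ Φ, p ≠ q → p.1 ≠ q.1 ∧ p.1 ≠ q.2 ∧ p.2 ≠ q.1 ∧ p.2 ≠ q.2
  noncross : ∀ p ∈ Φ, ∀ q ∈ Φ, ¬(p.1 < q.1 ∧ q.1 < p.2 ∧ p.2 < q.2)
  exposure : ∀ w ∈ Wst, (∀ p ∈ Φ, p.1 ≠ w ∧ p.2 ≠ w) → ∀ p ∈ Φ, ¬(p.1 < w ∧ w < p.2)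

lemma Feas.mem_ground {Wst Bst Φ} (h : Feas Wst Bst Φ) :
    ∀ p ∈ Φ, p.1 ∈ Wst ∪ Bst ∧ p.2 ∈ Wst ∪ Bst := by
  intro p hp
  rcases h.colors p hp with ⟨h1, h2⟩ | ⟨h1, h2⟩ <;>
    simp [Finset.mem_union, h1, h2]

lemma Feas.fresh {Wst Bst Φ} (h : Feas Wst Bst Φ) {u : ℕ} (hu : u ∉ Wst ∪ Bst) :
    ∀ p ∈ Φ, p.1 ≠ u ∧ p.2 ≠ u := by
  intro p hp
  obtain ⟨h1, h2⟩ := h.mem_ground p hp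
  exact ⟨fun hc => hu (hc ▸ h1), fun hc => hu (hc ▸ h2)⟩

lemma zetaA_congr {W₁ W₂ : Finset ℕ} {Φ : Finset (ℕ × ℕ)}
    (h : ∀ p ∈ Φ, (p.1 ∈ W₁ ↔ p.1 ∈ W₂)) : zetaA W₁ Φ = zetaA W₂ Φ := by
  unfold zetaA
  have e1 : Φ.filter (fun p => p.1 ∈ W₁) = Φ.filter (fun p => p.1 ∈ W₂) :=
    Finset.filter_congr (fun p hp => by simp [h p hp])
  have e2 : Φ.filter (fun p => p.1 ∉ W₁) = Φ.filter (fun p => p.1 ∉ W₂) :=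
    Finset.filter_congr (fun p hp => by simp [h p hp])
  rw [e1, e2]

lemma zetaA_insert (Wst : Finset ℕ) (Φ : Finset (ℕ × ℕ)) (u v : ℕ)
    (h : (u, v) ∉ Φ) :
    zetaA Wst (insert (u, v) Φ) = zetaA Wst Φ + (if u ∈ Wst then 1 else -1) := by
  unfold zetaA
  rw [Finset.filter_insert, Finset.filter_insert]
  by_cases hu : u ∈ Wst
  · rw [if_pos hu, if_neg (by simpa using hu), if_pos hu,
      Finset.card_insert_of_notMem (fun hc => h (Finset.mem_filter.1 hc).1)]
    push_cast; ring
  · rw [if_neg hu, if_pos (by simpa using hu), if_neg hu,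
      Finset.card_insert_of_notMem (fun hc => h (Finset.mem_filter.1 hc).1)]
    push_cast; ring

/-- Insert an "adjacent" bicolored arc `(u,v)` into a feasible system on the sets
with `u`, `v` removed. -/
lemma feas_insert {Wst Bst : Finset ℕ} {Φ : Finset (ℕ × ℕ)} {u v : ℕ}
    (huv : u < v)
    (hu : u ∉ Wst ∪ Bst) (hv : v ∉ Wst ∪ Bst)
    (hbtw : ∀ z ∈ Wst ∪ Bst, ¬(u < z ∧ z < v))
    (h : Feas Wst Bst Φ)
    {W' B' : Finset ℕ}
    (hWB' : (W' = insert u Wst ∧ B' = insert v Bst) ∨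
      (W' = insert v Wst ∧ B' = insert u Bst)) :
    Feas W' B' (insert (u, v) Φ) := by
  have hWsub : ∀ x ∈ Wst, x ∈ W' := by
    rcases hWB' with ⟨hW, -⟩ | ⟨hW, -⟩ <;> subst hW <;> exact fun x hx => Finset.mem_insert_of_mem hx
  have hBsub : ∀ x ∈ Bst, x ∈ B' := by
    rcases hWB' with ⟨-, hB⟩ | ⟨-, hB⟩ <;> subst hB <;> exact fun x hx => Finset.mem_insert_of_mem hx
  have huv' : (u ∈ W' ∧ v ∈ B') ∨ (u ∈ B' ∧ v ∈ W') := by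
    rcases hWB' with ⟨hW, hB⟩ | ⟨hW, hB⟩
    · exact Or.inl ⟨hW ▸ Finset.mem_insert_self _ _, hB ▸ Finset.mem_insert_self _ _⟩
    · exact Or.inr ⟨hB ▸ Finset.mem_insert_self _ _, hW ▸ Finset.mem_insert_self _ _⟩
  have hfreshu := h.fresh hu
  have hfreshv := h.fresh hv
  constructor
  · intro p hp
    rcases Finset.mem_insert.1 hp with rfl | hp
    · exact huv
    · exact h.lt p hp
  · intro p hp
    rcases Finset.mem_insert.1 hp with rfl | hp
    · rcases huv' with ⟨h1, h2⟩ | ⟨h1, h2⟩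
      · exact Or.inl ⟨h1, h2⟩
      · exact Or.inr ⟨h1, h2⟩
    · rcases h.colors p hp with ⟨h1, h2⟩ | ⟨h1, h2⟩
      · exact Or.inl ⟨hWsub _ h1, hBsub _ h2⟩
      · exact Or.inr ⟨hBsub _ h1, hWsub _ h2⟩
  · intro b hb
    have hBcase : b ∈ Bst ∨ b = u ∨ b = v := by
      rcases hWB' with ⟨hW, hB⟩ | ⟨hW, hB⟩
      · subst hB; rcases Finset.mem_insert.1 hb with h1 | h1
        · exact Or.inr (Or.inr h1)
        · exact Or.inl h1
      · subst hB; rcases Finset.mem_insert.1 hb with h1 | h1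
        · exact Or.inr (Or.inl h1)
        · exact Or.inl h1
    rcases hBcase with h1 | h1 | h1
    · obtain ⟨p, hp, hcov⟩ := h.coverB b h1
      exact ⟨p, Finset.mem_insert_of_mem hp, hcov⟩
    · exact ⟨(u, v), Finset.mem_insert_self _ _, Or.inl h1.symm⟩
    · exact ⟨(u, v), Finset.mem_insert_self _ _, Or.inr h1.symm⟩
  · intro p hp q hq hpq
    rcases Finset.mem_insert.1 hp with rfl | hp <;> rcases Finset.mem_insert.1 hq with rfl | hq
    · exact absurd rfl hpq
    · have h1 := h.fresh hu q hq
      have h2 := h.fresh hv q hq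
      exact ⟨fun hc => h1.1 hc.symm, fun hc => h1.2 hc.symm,
        fun hc => h2.1 hc.symm, fun hc => h2.2 hc.symm⟩
    · have h1 := h.fresh hu p hp
      have h2 := h.fresh hv p hp
      exact ⟨fun hc => h1.1 hc, fun hc => h2.1 hc, fun hc => h1.2 hc, fun hc => h2.2 hc⟩
    · exact h.pdisj p hp q hq hpq
  · intro p hp q hq
    rcases Finset.mem_insert.1 hp with rfl | hp <;> rcases Finset.mem_insert.1 hq with rfl | hq
    · rintro ⟨h1, -, -⟩; exact absurd h1 (lt_irrefl _)
    · rintro ⟨h1, h2, -⟩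
      exact hbtw q.1 (h.mem_ground q hq).1 ⟨h1, h2⟩
    · rintro ⟨-, h2, h3⟩
      exact hbtw p.2 (h.mem_ground p hp).2 ⟨h2, h3⟩
    · exact h.noncross p hp q hq
  · intro w hwW hwfree p hp
    have hwfree' : ∀ p ∈ Φ, p.1 ≠ w ∧ p.2 ≠ w :=
      fun p hp => hwfree p (Finset.mem_insert_of_mem hp)
    have hwu : w ≠ u := fun hc => (hwfree (u, v) (Finset.mem_insert_self _ _)).1 hc.symm
    have hwv : w ≠ v := fun hc => (hwfree (u, v) (Finset.mem_insert_self _ _)).2 hc.symm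
    have hwWst : w ∈ Wst := by
      rcases hWB' with ⟨hW, -⟩ | ⟨hW, -⟩ <;> subst hW <;>
        rcases Finset.mem_insert.1 hwW with h1 | h1 <;> first
          | exact absurd h1 hwu | exact absurd h1 hwv | exact h1
    rcases Finset.mem_insert.1 hp with rfl | hp
    · exact fun hc => hbtw w (Finset.mem_union_left _ hwWst) hc
    · exact h.exposure w hwWst hwfree' p hp

end NC
namespace NC
open Finset

/-- Replace `a` by `a'`. -/
def rep (a a' x : ℕ) : ℕ := if x = a then a' else x

lemma rep_self (a a' : ℕ) : rep a a' a = a' := by simp [rep]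
lemma rep_other (a a' : ℕ) {x : ℕ} (h : x ≠ a) : rep a a' x = x := by simp [rep, h]

/-- Substituting one point `a` by a fresh point `a'` that compares identically
with every other ground point preserves feasibility and `zetaA`. -/
lemma feas_subst {Wst Bst : Finset ℕ} {Φ : Finset (ℕ × ℕ)} (hd : Disjoint Wst Bst)
    (h : Feas Wst Bst Φ) {a a' : ℕ}
    (ha' : a' ∉ Wst ∪ Bst)
    (horder : ∀ z ∈ Wst ∪ Bst, z ≠ a → ((z < a ↔ z < a') ∧ (a < z ↔ a' < z)))
    {W' B' : Finset ℕ}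
    (hWB' : (a ∈ Wst ∧ W' = insert a' (Wst.erase a) ∧ B' = Bst) ∨
            (a ∈ Bst ∧ W' = Wst ∧ B' = insert a' (Bst.erase a))) :
    Feas W' B' (Φ.image (Prod.map (rep a a') (rep a a'))) ∧
      zetaA W' (Φ.image (Prod.map (rep a a') (rep a a'))) = zetaA Wst Φ := by
  have haG : a ∈ Wst ∪ Bst := by
    rcases hWB' with ⟨h1, -⟩ | ⟨h1, -⟩
    · exact Finset.mem_union_left _ h1
    · exact Finset.mem_union_right _ h1
  have haa' : a ≠ a' := fun hc => ha' (hc ▸ haG)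
  -- membership transfer
  have hmemW : ∀ z ∈ Wst ∪ Bst, (rep a a' z ∈ W' ↔ z ∈ Wst) := by
    intro z hz
    by_cases hza : z = a
    · subst hza
      rw [rep_self]
      rcases hWB' with ⟨h1, h2, -⟩ | ⟨h1, h2, -⟩
      · subst h2; simp [h1]
      · subst h2
        constructor
        · intro hc; exact absurd (Finset.mem_union_left _ hc) ha'
        · intro hc; exact absurd hc (Finset.disjoint_right.1 hd h1)
    · rw [rep_other _ _ hza]
      rcases hWB' with ⟨-, h2, -⟩ | ⟨-, h2, -⟩
      · subst h2
        constructor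
        · intro hc
          rcases Finset.mem_insert.1 hc with h1 | hc
          · exact absurd (h1 ▸ hz) ha'
          · exact Finset.mem_of_mem_erase hc
        · intro hc; exact Finset.mem_insert_of_mem (Finset.mem_erase.2 ⟨hza, hc⟩)
      · subst h2; exact Iff.rfl
  have hmemB : ∀ z ∈ Wst ∪ Bst, (rep a a' z ∈ B' ↔ z ∈ Bst) := by
    intro z hz
    by_cases hza : z = a
    · subst hza
      rw [rep_self]
      rcases hWB' with ⟨h1, -, h3⟩ | ⟨h1, -, h3⟩
      · subst h3
        constructor
        · intro hc; exact absurd (Finset.mem_union_right _ hc) ha'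
        · intro hc; exact absurd h1 (Finset.disjoint_right.1 hd hc)
      · subst h3; simp [h1]
    · rw [rep_other _ _ hza]
      rcases hWB' with ⟨-, -, h3⟩ | ⟨-, -, h3⟩
      · subst h3; exact Iff.rfl
      · subst h3
        constructor
        · intro hc
          rcases Finset.mem_insert.1 hc with h1 | hc
          · exact absurd (h1 ▸ hz) ha'
          · exact Finset.mem_of_mem_erase hc
        · intro hc; exact Finset.mem_insert_of_mem (Finset.mem_erase.2 ⟨hza, hc⟩)
  -- order transfer
  have hord : ∀ z ∈ Wst ∪ Bst, ∀ z' ∈ Wst ∪ Bst, (rep a a' z < rep a a' z' ↔ z < z') := by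
    intro z hz z' hz'
    by_cases hza : z = a <;> by_cases hz'a : z' = a
    · subst hza; subst hz'a; simp [rep_self]
    · subst hza
      rw [rep_self, rep_other _ _ hz'a]
      exact ((horder z' hz' hz'a).2).symm
    · subst hz'a
      rw [rep_self, rep_other _ _ hza]
      exact ((horder z hz hza).1).symm
    · rw [rep_other _ _ hza, rep_other _ _ hz'a]
  have hinj : ∀ z ∈ Wst ∪ Bst, ∀ z' ∈ Wst ∪ Bst, rep a a' z = rep a a' z' → z = z' := by
    intro z hz z' hz' he
    by_cases hza : z = a <;> by_cases hz'a : z' = a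
    · rw [hza, hz'a]
    · rw [hza, rep_self, rep_other _ _ hz'a] at he
      exact absurd (he ▸ hz') ha'
    · rw [hz'a, rep_self, rep_other _ _ hza] at he
      exact absurd (he.symm ▸ hz) ha'
    · rwa [rep_other _ _ hza, rep_other _ _ hz'a] at he
  have hg1 : ∀ p ∈ Φ, p.1 ∈ Wst ∪ Bst := fun p hp => (h.mem_ground p hp).1
  have hg2 : ∀ p ∈ Φ, p.2 ∈ Wst ∪ Bst := fun p hp => (h.mem_ground p hp).2
  set f : ℕ × ℕ → ℕ × ℕ := Prod.map (rep a a') (rep a a') with hf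
  have hfdef : ∀ p : ℕ × ℕ, f p = (rep a a' p.1, rep a a' p.2) := fun p => rfl
  constructor
  · constructor
    · intro q hq
      obtain ⟨p, hp, rfl⟩ := Finset.mem_image.1 hq
      rw [hfdef]
      exact (hord _ (hg1 p hp) _ (hg2 p hp)).2 (h.lt p hp)
    · intro q hq
      obtain ⟨p, hp, rfl⟩ := Finset.mem_image.1 hq
      rw [hfdef]
      rcases h.colors p hp with ⟨h1, h2⟩ | ⟨h1, h2⟩
      · exact Or.inl ⟨(hmemW _ (hg1 p hp)).2 h1, (hmemB _ (hg2 p hp)).2 h2⟩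
      · exact Or.inr ⟨(hmemB _ (hg1 p hp)).2 h1, (hmemW _ (hg2 p hp)).2 h2⟩
    · intro b hb
      have : ∃ z ∈ Wst ∪ Bst, z ∈ Bst ∧ rep a a' z = b := by
        rcases hWB' with ⟨h1, -, h3⟩ | ⟨h1, -, h3⟩
        · subst h3
          refine ⟨b, Finset.mem_union_right _ hb, hb, rep_other _ _ ?_⟩
          intro hc; exact absurd h1 (Finset.disjoint_right.1 hd (hc ▸ hb))
        · subst h3
          rcases Finset.mem_insert.1 hb with rfl | hb
          · exact ⟨a, Finset.mem_union_right _ h1, h1, rep_self _ _⟩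
          · exact ⟨b, Finset.mem_union_right _ (Finset.mem_of_mem_erase hb),
              Finset.mem_of_mem_erase hb, rep_other _ _ (Finset.mem_erase.1 hb).1⟩
      obtain ⟨z, hzG, hzB, hzrep⟩ := this
      obtain ⟨p, hp, hcov⟩ := h.coverB z hzB
      refine ⟨f p, Finset.mem_image_of_mem f hp, ?_⟩
      rw [hfdef]
      rcases hcov with h1 | h1
      · exact Or.inl (by rw [h1, hzrep])
      · exact Or.inr (by rw [h1, hzrep])
    · intro q hq q' hq' hne
      obtain ⟨p, hp, rfl⟩ := Finset.mem_image.1 hq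
      obtain ⟨p', hp', rfl⟩ := Finset.mem_image.1 hq'
      have hpp' : p ≠ p' := fun hc => hne (hc ▸ rfl)
      obtain ⟨d1, d2, d3, d4⟩ := h.pdisj p hp p' hp' hpp'
      rw [hfdef, hfdef]
      refine ⟨?_, ?_, ?_, ?_⟩ <;> intro hc
      · exact d1 (hinj _ (hg1 p hp) _ (hg1 p' hp') hc)
      · exact d2 (hinj _ (hg1 p hp) _ (hg2 p' hp') hc)
      · exact d3 (hinj _ (hg2 p hp) _ (hg1 p' hp') hc)
      · exact d4 (hinj _ (hg2 p hp) _ (hg2 p' hp') hc)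
    · intro q hq q' hq'
      obtain ⟨p, hp, rfl⟩ := Finset.mem_image.1 hq
      obtain ⟨p', hp', rfl⟩ := Finset.mem_image.1 hq'
      rw [hfdef, hfdef]
      rintro ⟨h1, h2, h3⟩
      exact h.noncross p hp p' hp'
        ⟨(hord _ (hg1 p hp) _ (hg1 p' hp')).1 h1,
         (hord _ (hg1 p' hp') _ (hg2 p hp)).1 h2,
         (hord _ (hg2 p hp) _ (hg2 p' hp')).1 h3⟩
    · intro w hwW' hwfree q hq
      obtain ⟨p, hp, rfl⟩ := Finset.mem_image.1 hq
      have : ∃ z ∈ Wst ∪ Bst, z ∈ Wst ∧ rep a a' z = w := by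
        rcases hWB' with ⟨h1, h2, -⟩ | ⟨h1, h2, -⟩
        · subst h2
          rcases Finset.mem_insert.1 hwW' with rfl | hw
          · exact ⟨a, Finset.mem_union_left _ h1, h1, rep_self _ _⟩
          · exact ⟨w, Finset.mem_union_left _ (Finset.mem_of_mem_erase hw),
              Finset.mem_of_mem_erase hw, rep_other _ _ (Finset.mem_erase.1 hw).1⟩
        · subst h2
          refine ⟨w, Finset.mem_union_left _ hwW', hwW', rep_other _ _ ?_⟩
          intro hc; exact absurd (hc ▸ hwW') (Finset.disjoint_right.1 hd h1)
      obtain ⟨z, hzG, hzW, hzrep⟩ := this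
      have hzfree : ∀ p ∈ Φ, p.1 ≠ z ∧ p.2 ≠ z := by
        intro p' hp'
        have := hwfree (f p') (Finset.mem_image_of_mem f hp')
        rw [hfdef] at this
        constructor
        · intro hc; exact this.1 (by rw [hc, hzrep])
        · intro hc; exact this.2 (by rw [hc, hzrep])
      have := h.exposure z hzW hzfree p hp
      rw [hfdef, ← hzrep]
      rintro ⟨h1, h2⟩
      exact this ⟨(hord _ (hg1 p hp) _ hzG).1 h1, (hord _ hzG _ (hg2 p hp)).1 h2⟩
  · -- zetaA preserved
    have hinjOn : Set.InjOn f ↑Φ := by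
      intro p hp p' hp' he
      rw [hfdef, hfdef, Prod.ext_iff] at he
      exact Prod.ext (hinj _ (hg1 p hp) _ (hg1 p' hp') he.1)
        (hinj _ (hg2 p hp) _ (hg2 p' hp') he.2)
    have key : ∀ p ∈ Φ, ((f p).1 ∈ W' ↔ p.1 ∈ Wst) := by
      intro p hp; rw [hfdef]; exact hmemW _ (hg1 p hp)
    have e1 : (Φ.image f).filter (fun q => q.1 ∈ W') =
        (Φ.filter (fun p => p.1 ∈ Wst)).image f := by
      ext q
      simp only [Finset.mem_filter, Finset.mem_image]
      constructor
      · rintro ⟨⟨p, hp, rfl⟩, hq⟩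
        exact ⟨p, ⟨hp, (key p hp).1 hq⟩, rfl⟩
      · rintro ⟨p, ⟨hp, hP⟩, rfl⟩
        exact ⟨⟨p, hp, rfl⟩, (key p hp).2 hP⟩
    have e2 : (Φ.image f).filter (fun q => q.1 ∉ W') =
        (Φ.filter (fun p => p.1 ∉ Wst)).image f := by
      ext q
      simp only [Finset.mem_filter, Finset.mem_image]
      constructor
      · rintro ⟨⟨p, hp, rfl⟩, hq⟩
        exact ⟨p, ⟨hp, fun hc => hq ((key p hp).2 hc)⟩, rfl⟩
      · rintro ⟨p, ⟨hp, hP⟩, rfl⟩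
        exact ⟨⟨p, hp, rfl⟩, fun hc => hP ((key p hp).1 hc)⟩
    unfold zetaA
    rw [e1, e2,
      Finset.card_image_of_injOn (hinjOn.mono (by intro x hx; exact Finset.mem_coe.2 (Finset.mem_of_mem_filter x (Finset.mem_coe.1 hx)))),
      Finset.card_image_of_injOn (hinjOn.mono (by intro x hx; exact Finset.mem_coe.2 (Finset.mem_of_mem_filter x (Finset.mem_coe.1 hx))))]

/-- Every bicolored configuration with at least as many whites as blacks has a
feasible arc system. -/
lemma ex_feas : ∀ N : ℕ, ∀ Wst Bst : Finset ℕ, Bst.card ≤ N → Disjoint Wst Bst →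
    Bst.card ≤ Wst.card → ∃ Φ, Feas Wst Bst Φ := by
  intro N
  induction N with
  | zero =>
    intro W B hN hd hc
    have : B = ∅ := Finset.card_eq_zero.1 (Nat.le_zero.1 hN)
    subst this
    exact ⟨∅, by constructor <;> simp⟩
  | succ n IH =>
    intro W B hN hd hc
    rcases eq_or_ne B ∅ with rfl | hB
    · exact ⟨∅, by constructor <;> simp⟩
    have hBne : B.Nonempty := Finset.nonempty_iff_ne_empty.2 hB
    have hWne : W.Nonempty := Finset.card_pos.1 (lt_of_lt_of_le (Finset.card_pos.2 hBne) hc)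
    set b0 := B.max' hBne with hb0
    have hb0B : b0 ∈ B := B.max'_mem hBne
    by_cases hup : ∃ w ∈ W, b0 < w
    · set T := W.filter (fun w => b0 < w) with hT
      have hTne : T.Nonempty := by
        obtain ⟨w, hw, hlt⟩ := hup
        exact ⟨w, Finset.mem_filter.2 ⟨hw, hlt⟩⟩
      set v := T.min' hTne with hv
      have hvT : v ∈ T := T.min'_mem hTne
      have hvW : v ∈ W := (Finset.mem_filter.1 hvT).1
      have hb0v : b0 < v := (Finset.mem_filter.1 hvT).2
      have hcard : (B.erase b0).card ≤ n := by
        rw [Finset.card_erase_of_mem hb0B]; omega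
      have hcard2 : (B.erase b0).card ≤ (W.erase v).card := by
        rw [Finset.card_erase_of_mem hb0B, Finset.card_erase_of_mem hvW]; omega
      obtain ⟨Φ0, hΦ0⟩ := IH (W.erase v) (B.erase b0) hcard
        (hd.mono (Finset.erase_subset _ _) (Finset.erase_subset _ _)) hcard2
      refine ⟨insert (b0, v) Φ0, ?_⟩
      have := feas_insert (u := b0) (v := v) hb0v
        (by
          simp only [Finset.mem_union, Finset.mem_erase, not_or, not_and]
          constructor
          · intro _ hmem; exact absurd hb0B (Finset.disjoint_left.1 hd hmem)
          · intro hne; exact absurd rfl hne)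
        (by
          simp only [Finset.mem_union, Finset.mem_erase, not_or, not_and]
          constructor
          · intro hne; exact absurd rfl hne
          · intro _ hmem; exact absurd hmem (Finset.disjoint_left.1 hd hvW))
        (by
          intro z hz
          rcases Finset.mem_union.1 hz with hz | hz
          · obtain ⟨hzv, hzW⟩ := Finset.mem_erase.1 hz
            rintro ⟨h1, h2⟩
            have : z ∈ T := Finset.mem_filter.2 ⟨hzW, h1⟩
            exact absurd (T.min'_le z this) (by omega)
          · obtain ⟨hzb, hzB⟩ := Finset.mem_erase.1 hz
            rintro ⟨h1, -⟩
            exact absurd (B.le_max' z hzB) (by omega))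
        hΦ0
        (Or.inr ⟨(Finset.insert_erase hvW).symm, (Finset.insert_erase hb0B).symm⟩)
      exact this
    · push_neg at hup
      set w0 := W.max' hWne with hw0
      have hw0W : w0 ∈ W := W.max'_mem hWne
      have hwlt : ∀ w ∈ W, w < b0 := by
        intro w hw
        have h1 : w ≤ b0 := hup w hw
        have h2 : w ≠ b0 := fun hc => absurd hb0B (Finset.disjoint_left.1 hd (hc ▸ hw))
        omega
      set T := B.filter (fun b => w0 < b) with hT
      have hTne : T.Nonempty := ⟨b0, Finset.mem_filter.2 ⟨hb0B, hwlt w0 hw0W⟩⟩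
      set b1 := T.min' hTne with hb1
      have hb1T : b1 ∈ T := T.min'_mem hTne
      have hb1B : b1 ∈ B := (Finset.mem_filter.1 hb1T).1
      have hw0b1 : w0 < b1 := (Finset.mem_filter.1 hb1T).2
      have hcard : (B.erase b1).card ≤ n := by
        rw [Finset.card_erase_of_mem hb1B]; omega
      have hcard2 : (B.erase b1).card ≤ (W.erase w0).card := by
        rw [Finset.card_erase_of_mem hb1B, Finset.card_erase_of_mem hw0W]; omega
      obtain ⟨Φ0, hΦ0⟩ := IH (W.erase w0) (B.erase b1) hcard
        (hd.mono (Finset.erase_subset _ _) (Finset.erase_subset _ _)) hcard2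
      refine ⟨insert (w0, b1) Φ0, ?_⟩
      have := feas_insert (u := w0) (v := b1) hw0b1
        (by
          simp only [Finset.mem_union, Finset.mem_erase, not_or, not_and]
          constructor
          · intro hne; exact absurd rfl hne
          · intro _ hmem; exact absurd hw0W (Finset.disjoint_right.1 hd hmem))
        (by
          simp only [Finset.mem_union, Finset.mem_erase, not_or, not_and]
          constructor
          · intro _ hmem; exact absurd hb1B (Finset.disjoint_left.1 hd hmem)
          · intro hne; exact absurd rfl hne)
        (by
          intro z hz
          rcases Finset.mem_union.1 hz with hz | hz
          · obtain ⟨hzw, hzW⟩ := Finset.mem_erase.1 hz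
            rintro ⟨h1, -⟩
            exact absurd (W.le_max' z hzW) (by omega)
          · obtain ⟨hzb, hzB⟩ := Finset.mem_erase.1 hz
            rintro ⟨h1, h2⟩
            have : z ∈ T := Finset.mem_filter.2 ⟨hzB, h1⟩
            exact absurd (T.min'_le z this) (by omega))
        hΦ0
        (Or.inl ⟨(Finset.insert_erase hw0W).symm, (Finset.insert_erase hb1B).symm⟩)
      exact this

end NC
namespace NC
open Finset

lemma flip_wbw {Wst Bst : Finset ℕ} (hd : Disjoint Wst Bst) (hc : Bst.card ≤ Wst.card)
    {w1 b w2 : ℕ} (hw1 : w1 ∈ Wst) (hb : b ∈ Bst) (hw2 : w2 ∈ Wst)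
    (h1 : w1 < b) (h2 : b < w2)
    (hadj : ∀ z ∈ Wst ∪ Bst, z ≠ b → ¬(w1 < z ∧ z < w2)) :
    ∃ Φ Φ', Feas Wst Bst Φ ∧ Feas Wst Bst Φ' ∧ zetaA Wst Φ ≠ zetaA Wst Φ' := by
  have hw12 : w1 ≠ w2 := ne_of_lt (h1.trans h2)
  have hbW : b ∉ Wst := Finset.disjoint_right.1 hd hb
  have hw1B : w1 ∉ Bst := Finset.disjoint_left.1 hd hw1
  have hw2B : w2 ∉ Bst := Finset.disjoint_left.1 hd hw2
  have hcard : (Bst.erase b).card ≤ (Wst.erase w1).card := by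
    rw [Finset.card_erase_of_mem hb, Finset.card_erase_of_mem hw1]; omega
  obtain ⟨Φ1, hΦ1⟩ := ex_feas (Bst.erase b).card (Wst.erase w1) (Bst.erase b) le_rfl
    (hd.mono (Finset.erase_subset _ _) (Finset.erase_subset _ _)) hcard
  have hw1fresh : w1 ∉ (Wst.erase w1) ∪ (Bst.erase b) := by
    simp only [Finset.mem_union, Finset.mem_erase, not_or, not_and]
    exact ⟨fun hne => absurd rfl hne, fun _ h => hw1B h⟩
  have hbfresh : b ∉ (Wst.erase w1) ∪ (Bst.erase b) := by
    simp only [Finset.mem_union, Finset.mem_erase, not_or, not_and]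
    exact ⟨fun _ h => hbW h, fun hne => absurd rfl hne⟩
  have hΦfeas : Feas Wst Bst (insert (w1, b) Φ1) := by
    have := feas_insert (u := w1) (v := b) h1 hw1fresh hbfresh
      (by
        intro z hz
        rintro ⟨hz1, hz2⟩
        have hzne : z ≠ b := ne_of_lt hz2
        have hzG : z ∈ Wst ∪ Bst := by
          rcases Finset.mem_union.1 hz with h | h
          · exact Finset.mem_union_left _ (Finset.mem_of_mem_erase h)
          · exact Finset.mem_union_right _ (Finset.mem_of_mem_erase h)
        exact hadj z hzG hzne ⟨hz1, hz2.trans h2⟩)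
      hΦ1 (Or.inl ⟨(Finset.insert_erase hw1).symm, (Finset.insert_erase hb).symm⟩)
    exact this
  have hnm1 : (w1, b) ∉ Φ1 := fun hcm => (hΦ1.fresh hw1fresh _ hcm).1 rfl
  have hz1 : zetaA Wst (insert (w1, b) Φ1) = zetaA Wst Φ1 + 1 := by
    rw [zetaA_insert _ _ _ _ hnm1, if_pos hw1]
  have hcongr1 : zetaA Wst Φ1 = zetaA (Wst.erase w1) Φ1 := by
    apply zetaA_congr
    intro p hp
    rcases Finset.mem_union.1 (hΦ1.mem_ground p hp).1 with h | h
    · exact iff_of_true (Finset.mem_of_mem_erase h) h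
    · exact iff_of_false (fun hc => Finset.disjoint_left.1 hd hc (Finset.mem_of_mem_erase h))
        (fun hc => Finset.disjoint_left.1 hd (Finset.mem_of_mem_erase hc)
          (Finset.mem_of_mem_erase h))
  -- substituted system
  have hw2' : w2 ∈ Wst.erase w1 := Finset.mem_erase.2 ⟨hw12.symm, hw2⟩
  obtain ⟨hfeas2, hzeq2⟩ := feas_subst
    (hd.mono (Finset.erase_subset _ _) (Finset.erase_subset _ _)) hΦ1
    (a := w2) (a' := w1) hw1fresh
    (by
      intro z hz hzw2
      have hzG : z ∈ Wst ∪ Bst := by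
        rcases Finset.mem_union.1 hz with h | h
        · exact Finset.mem_union_left _ (Finset.mem_of_mem_erase h)
        · exact Finset.mem_union_right _ (Finset.mem_of_mem_erase h)
      have hzw1 : z ≠ w1 := by
        rcases Finset.mem_union.1 hz with h | h
        · exact (Finset.mem_erase.1 h).1
        · exact fun hc => hw1B (hc ▸ Finset.mem_of_mem_erase h)
      have hzb : z ≠ b := by
        rcases Finset.mem_union.1 hz with h | h
        · exact fun hc => hbW (hc ▸ Finset.mem_of_mem_erase h)
        · exact (Finset.mem_erase.1 h).1
      have hout : ¬(w1 < z ∧ z < w2) := hadj z hzG hzb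
      have : z < w1 ∨ w2 < z := by
        rcases Nat.lt_trichotomy z w1 with h | h | h
        · exact Or.inl h
        · exact absurd h hzw1
        · rcases Nat.lt_trichotomy z w2 with h' | h' | h'
          · exact absurd ⟨h, h'⟩ hout
          · exact absurd h' hzw2
          · exact Or.inr h'
      constructor <;> omega)
    (Or.inl ⟨hw2', rfl, rfl⟩)
  set Φ2 := Φ1.image (Prod.map (rep w2 w1) (rep w2 w1)) with hΦ2def
  have hsetE : insert w1 ((Wst.erase w1).erase w2) = Wst.erase w2 := by
    rw [Finset.erase_right_comm, Finset.insert_erase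
      (Finset.mem_erase.2 ⟨hw12, hw1⟩)]
  rw [hsetE] at hfeas2 hzeq2
  have hbfresh2 : b ∉ (Wst.erase w2) ∪ (Bst.erase b) := by
    simp only [Finset.mem_union, Finset.mem_erase, not_or, not_and]
    exact ⟨fun _ h => hbW h, fun hne => absurd rfl hne⟩
  have hw2fresh2 : w2 ∉ (Wst.erase w2) ∪ (Bst.erase b) := by
    simp only [Finset.mem_union, Finset.mem_erase, not_or, not_and]
    exact ⟨fun hne => absurd rfl hne, fun _ h => hw2B h⟩
  have hΦ'feas : Feas Wst Bst (insert (b, w2) Φ2) := by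
    have := feas_insert (u := b) (v := w2) h2 hbfresh2 hw2fresh2
      (by
        intro z hz
        rintro ⟨hz1, hz2⟩
        have hzG : z ∈ Wst ∪ Bst := by
          rcases Finset.mem_union.1 hz with h | h
          · exact Finset.mem_union_left _ (Finset.mem_of_mem_erase h)
          · exact Finset.mem_union_right _ (Finset.mem_of_mem_erase h)
        have hzb : z ≠ b := ne_of_gt hz1
        exact hadj z hzG hzb ⟨h1.trans hz1, hz2⟩)
      hfeas2 (Or.inr ⟨(Finset.insert_erase hw2).symm, (Finset.insert_erase hb).symm⟩)
    exact this
  have hnm2 : (b, w2) ∉ Φ2 := fun hcm => (hfeas2.fresh hbfresh2 _ hcm).1 rfl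
  have hz2 : zetaA Wst (insert (b, w2) Φ2) = zetaA Wst Φ2 - 1 := by
    rw [zetaA_insert _ _ _ _ hnm2, if_neg hbW]; ring
  have hcongr2 : zetaA Wst Φ2 = zetaA (Wst.erase w2) Φ2 := by
    apply zetaA_congr
    intro p hp
    rcases Finset.mem_union.1 (hfeas2.mem_ground p hp).1 with h | h
    · exact iff_of_true (Finset.mem_of_mem_erase h) h
    · exact iff_of_false (fun hc => Finset.disjoint_left.1 hd hc (Finset.mem_of_mem_erase h))
        (fun hc => Finset.disjoint_left.1 hd (Finset.mem_of_mem_erase hc)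
          (Finset.mem_of_mem_erase h))
  refine ⟨insert (w1, b) Φ1, insert (b, w2) Φ2, hΦfeas, hΦ'feas, ?_⟩
  rw [hz1, hz2, hcongr1, hcongr2, hzeq2]
  omega

lemma flip_bwb {Wst Bst : Finset ℕ} (hd : Disjoint Wst Bst) (hc : Bst.card ≤ Wst.card)
    {b1 w b2 : ℕ} (hb1 : b1 ∈ Bst) (hw : w ∈ Wst) (hb2 : b2 ∈ Bst)
    (h1 : b1 < w) (h2 : w < b2)
    (hadj : ∀ z ∈ Wst ∪ Bst, z ≠ w → ¬(b1 < z ∧ z < b2)) :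
    ∃ Φ Φ', Feas Wst Bst Φ ∧ Feas Wst Bst Φ' ∧ zetaA Wst Φ ≠ zetaA Wst Φ' := by
  have hb12 : b1 ≠ b2 := ne_of_lt (h1.trans h2)
  have hwB : w ∉ Bst := Finset.disjoint_left.1 hd hw
  have hb1W : b1 ∉ Wst := Finset.disjoint_right.1 hd hb1
  have hb2W : b2 ∉ Wst := Finset.disjoint_right.1 hd hb2
  have hcard : (Bst.erase b1).card ≤ (Wst.erase w).card := by
    rw [Finset.card_erase_of_mem hb1, Finset.card_erase_of_mem hw]; omega
  obtain ⟨Φ1, hΦ1⟩ := ex_feas (Bst.erase b1).card (Wst.erase w) (Bst.erase b1) le_rfl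
    (hd.mono (Finset.erase_subset _ _) (Finset.erase_subset _ _)) hcard
  have hwfresh : w ∉ (Wst.erase w) ∪ (Bst.erase b1) := by
    simp only [Finset.mem_union, Finset.mem_erase, not_or, not_and]
    exact ⟨fun hne => absurd rfl hne, fun _ h => hwB h⟩
  have hb1fresh : b1 ∉ (Wst.erase w) ∪ (Bst.erase b1) := by
    simp only [Finset.mem_union, Finset.mem_erase, not_or, not_and]
    exact ⟨fun _ h => hb1W h, fun hne => absurd rfl hne⟩
  have hGz : ∀ z, z ∈ (Wst.erase w) ∪ (Bst.erase b1) → z ∈ Wst ∪ Bst := by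
    intro z hz
    rcases Finset.mem_union.1 hz with h | h
    · exact Finset.mem_union_left _ (Finset.mem_of_mem_erase h)
    · exact Finset.mem_union_right _ (Finset.mem_of_mem_erase h)
  have hΦfeas : Feas Wst Bst (insert (b1, w) Φ1) := by
    have := feas_insert (u := b1) (v := w) h1 hb1fresh hwfresh
      (by
        intro z hz
        rintro ⟨hz1, hz2⟩
        have hzne : z ≠ w := ne_of_lt hz2
        exact hadj z (hGz z hz) hzne ⟨hz1, hz2.trans h2⟩)
      hΦ1 (Or.inr ⟨(Finset.insert_erase hw).symm, (Finset.insert_erase hb1).symm⟩)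
    exact this
  have hnm1 : (b1, w) ∉ Φ1 := fun hcm => (hΦ1.fresh hb1fresh _ hcm).1 rfl
  have hz1 : zetaA Wst (insert (b1, w) Φ1) = zetaA Wst Φ1 - 1 := by
    rw [zetaA_insert _ _ _ _ hnm1, if_neg hb1W]; ring
  have hcongr1 : zetaA Wst Φ1 = zetaA (Wst.erase w) Φ1 := by
    apply zetaA_congr
    intro p hp
    rcases Finset.mem_union.1 (hΦ1.mem_ground p hp).1 with h | h
    · exact iff_of_true (Finset.mem_of_mem_erase h) h
    · exact iff_of_false (fun hc => Finset.disjoint_left.1 hd hc (Finset.mem_of_mem_erase h))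
        (fun hc => Finset.disjoint_left.1 hd (Finset.mem_of_mem_erase hc)
          (Finset.mem_of_mem_erase h))
  have hb2' : b2 ∈ Bst.erase b1 := Finset.mem_erase.2 ⟨hb12.symm, hb2⟩
  obtain ⟨hfeas2, hzeq2⟩ := feas_subst
    (hd.mono (Finset.erase_subset _ _) (Finset.erase_subset _ _)) hΦ1
    (a := b2) (a' := b1) hb1fresh
    (by
      intro z hz hzb2
      have hzb1 : z ≠ b1 := by
        rcases Finset.mem_union.1 hz with h | h
        · exact fun hcm => hb1W (hcm ▸ Finset.mem_of_mem_erase h)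
        · exact (Finset.mem_erase.1 h).1
      have hzw : z ≠ w := by
        rcases Finset.mem_union.1 hz with h | h
        · exact (Finset.mem_erase.1 h).1
        · exact fun hcm => hwB (hcm ▸ Finset.mem_of_mem_erase h)
      have hout : ¬(b1 < z ∧ z < b2) := hadj z (hGz z hz) hzw
      have : z < b1 ∨ b2 < z := by
        rcases Nat.lt_trichotomy z b1 with h | h | h
        · exact Or.inl h
        · exact absurd h hzb1
        · rcases Nat.lt_trichotomy z b2 with h' | h' | h'
          · exact absurd ⟨h, h'⟩ hout
          · exact absurd h' hzb2
          · exact Or.inr h'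
      constructor <;> omega)
    (Or.inr ⟨hb2', rfl, rfl⟩)
  set Φ2 := Φ1.image (Prod.map (rep b2 b1) (rep b2 b1)) with hΦ2def
  have hsetE : insert b1 ((Bst.erase b1).erase b2) = Bst.erase b2 := by
    rw [Finset.erase_right_comm, Finset.insert_erase
      (Finset.mem_erase.2 ⟨hb12, hb1⟩)]
  rw [hsetE] at hfeas2
  have hwfresh2 : w ∉ (Wst.erase w) ∪ (Bst.erase b2) := by
    simp only [Finset.mem_union, Finset.mem_erase, not_or, not_and]
    exact ⟨fun hne => absurd rfl hne, fun _ h => hwB h⟩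
  have hb2fresh2 : b2 ∉ (Wst.erase w) ∪ (Bst.erase b2) := by
    simp only [Finset.mem_union, Finset.mem_erase, not_or, not_and]
    exact ⟨fun _ h => hb2W h, fun hne => absurd rfl hne⟩
  have hΦ'feas : Feas Wst Bst (insert (w, b2) Φ2) := by
    have := feas_insert (u := w) (v := b2) h2 hwfresh2 hb2fresh2
      (by
        intro z hz
        rintro ⟨hz1, hz2⟩
        have hzG : z ∈ Wst ∪ Bst := by
          rcases Finset.mem_union.1 hz with h | h
          · exact Finset.mem_union_left _ (Finset.mem_of_mem_erase h)
          · exact Finset.mem_union_right _ (Finset.mem_of_mem_erase h)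
        have hzw : z ≠ w := ne_of_gt hz1
        exact hadj z hzG hzw ⟨h1.trans hz1, hz2⟩)
      hfeas2 (Or.inl ⟨(Finset.insert_erase hw).symm, (Finset.insert_erase hb2).symm⟩)
    exact this
  have hnm2 : (w, b2) ∉ Φ2 := fun hcm => (hfeas2.fresh hwfresh2 _ hcm).1 rfl
  have hz2 : zetaA Wst (insert (w, b2) Φ2) = zetaA Wst Φ2 + 1 := by
    rw [zetaA_insert _ _ _ _ hnm2, if_pos hw]
  have hcongr2 : zetaA Wst Φ2 = zetaA (Wst.erase w) Φ2 := by
    apply zetaA_congr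
    intro p hp
    rcases Finset.mem_union.1 (hfeas2.mem_ground p hp).1 with h | h
    · exact iff_of_true (Finset.mem_of_mem_erase h) h
    · exact iff_of_false (fun hc => Finset.disjoint_left.1 hd hc (Finset.mem_of_mem_erase h))
        (fun hc => Finset.disjoint_left.1 hd (Finset.mem_of_mem_erase hc)
          (Finset.mem_of_mem_erase h))
  refine ⟨insert (b1, w) Φ1, insert (w, b2) Φ2, hΦfeas, hΦ'feas, ?_⟩
  rw [hz1, hz2, hcongr1, hcongr2, hzeq2]
  omega

end NC
namespace NC
open Finset

/-- The pattern `w < b < w` with `w`'s in the first set and `b` in the second. -/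
def PW (Wst Bst : Finset ℕ) : Prop :=
  ∃ w1 ∈ Wst, ∃ b ∈ Bst, ∃ w2 ∈ Wst, w1 < b ∧ b < w2

lemma two_feas_zero : ∀ N : ℕ, ∀ Wst Bst : Finset ℕ, Bst.card ≤ N → Disjoint Wst Bst →
    Wst.card = Bst.card → PW Wst Bst → PW Bst Wst →
    ∃ Φ Φ', Feas Wst Bst Φ ∧ Feas Wst Bst Φ' ∧ zetaA Wst Φ ≠ zetaA Wst Φ' := by
  intro N
  induction N with
  | zero =>
    intro W B hN hd hcard hPW hPB
    obtain ⟨w1, hw1, b, hb, -⟩ := hPW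
    have : 0 < B.card := Finset.card_pos.2 ⟨b, hb⟩
    omega
  | succ n IH =>
    intro W B hN hd hcard hPW hPB
    obtain ⟨w1₀, hw1₀, b₀, hb₀, w2₀, hw2₀, hlt1₀, hlt2₀⟩ := hPW
    obtain ⟨β1₀, hβ1₀, ω₀, hω₀, β2₀, hβ2₀, hltb1₀, hltb2₀⟩ := hPB
    have hWne : W.Nonempty := ⟨w1₀, hw1₀⟩
    have hBne : B.Nonempty := ⟨b₀, hb₀⟩
    by_cases hA : ∃ w1 ∈ W, ∃ b ∈ B, ∃ w2 ∈ W,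
        (w1 < b ∧ b < w2) ∧ ∀ z ∈ W ∪ B, z ≠ b → ¬(w1 < z ∧ z < w2)
    · obtain ⟨w1, hw1, b, hb, w2, hw2, ⟨h1, h2⟩, hadj⟩ := hA
      exact flip_wbw hd (le_of_eq hcard.symm) hw1 hb hw2 h1 h2 hadj
    by_cases hB : ∃ b1 ∈ B, ∃ w ∈ W, ∃ b2 ∈ B,
        (b1 < w ∧ w < b2) ∧ ∀ z ∈ W ∪ B, z ≠ w → ¬(b1 < z ∧ z < b2)
    · obtain ⟨b1, hb1, w, hw, b2, hb2, ⟨h1, h2⟩, hadj⟩ := hB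
      exact flip_bwb hd (le_of_eq hcard.symm) hb1 hw hb2 h1 h2 hadj
    have hGne : (W ∪ B).Nonempty := hWne.mono Finset.subset_union_left
    set m := (W ∪ B).min' hGne with hmdef
    have hmG : m ∈ W ∪ B := (W ∪ B).min'_mem hGne
    have hmmin : ∀ z ∈ W ∪ B, m ≤ z := fun z hz => (W ∪ B).min'_le z hz
    rcases Finset.mem_union.1 hmG with hmW | hmB
    · -- minimum is white
      set u := B.min' hBne with hudef
      have huB : u ∈ B := B.min'_mem hBne
      have hmu : m < u := lt_of_le_of_ne (hmmin u (Finset.mem_union_right _ huB))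
        (fun hc => Finset.disjoint_left.1 hd (hc ▸ hmW) huB)
      set T1 := W.filter (fun w => u < w) with hT1def
      have hT1ne : T1.Nonempty :=
        ⟨ω₀, Finset.mem_filter.2 ⟨hω₀, lt_of_le_of_lt (B.min'_le β1₀ hβ1₀) hltb1₀⟩⟩
      set v := T1.min' hT1ne with hvdef
      have hvT1 : v ∈ T1 := T1.min'_mem hT1ne
      have hvW : v ∈ W := (Finset.mem_filter.1 hvT1).1
      have huv : u < v := (Finset.mem_filter.1 hvT1).2
      set T2 := B.filter (fun b => b < v) with hT2def
      have hT2ne : T2.Nonempty := ⟨u, Finset.mem_filter.2 ⟨huB, huv⟩⟩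
      set vm := T2.max' hT2ne with hvmdef
      have hvmT2 : vm ∈ T2 := T2.max'_mem hT2ne
      have hvmB : vm ∈ B := (Finset.mem_filter.1 hvmT2).1
      have hvmv : vm < v := (Finset.mem_filter.1 hvmT2).2
      have huvm : u ≤ vm := T2.le_max' u (Finset.mem_filter.2 ⟨huB, huv⟩)
      -- adjacency of (vm, v)
      have f2 : ∀ z ∈ W ∪ B, ¬(vm < z ∧ z < v) := by
        rintro z hz ⟨hz1, hz2⟩
        rcases Finset.mem_union.1 hz with hzW | hzB
        · have : z ∈ T1 := Finset.mem_filter.2 ⟨hzW, lt_of_le_of_lt huvm hz1⟩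
          exact absurd (T1.min'_le z this) (by omega)
        · have : z ∈ T2 := Finset.mem_filter.2 ⟨hzB, hz2⟩
          exact absurd (T2.le_max' z this) (by omega)
      -- a second black below v
      have f3 : ∃ b' ∈ B, b' < v ∧ b' ≠ vm := by
        by_contra h3
        push_neg at h3
        set T3 := (W ∪ B).filter (fun z => z < vm) with hT3def
        have hT3ne : T3.Nonempty := ⟨m, Finset.mem_filter.2 ⟨hmG,
          lt_of_le_of_ne (hmmin vm (Finset.mem_union_right _ hvmB))
            (fun hc => Finset.disjoint_left.1 hd (hc ▸ hmW) hvmB)⟩⟩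
        set wb := T3.max' hT3ne with hwbdef
        have hwbT3 : wb ∈ T3 := T3.max'_mem hT3ne
        have hwbG : wb ∈ W ∪ B := (Finset.mem_filter.1 hwbT3).1
        have hwbvm : wb < vm := (Finset.mem_filter.1 hwbT3).2
        have hwbW : wb ∈ W := by
          rcases Finset.mem_union.1 hwbG with h | h
          · exact h
          · exact absurd (h3 wb h (hwbvm.trans hvmv)) (by omega)
        refine hA ⟨wb, hwbW, vm, hvmB, v, hvW, ⟨hwbvm, hvmv⟩, ?_⟩
        rintro z hz hzvm ⟨hz1, hz2⟩
        rcases Nat.lt_trichotomy z vm with h | h | h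
        · exact absurd (T3.le_max' z (Finset.mem_filter.2 ⟨hz, h⟩)) (by omega)
        · exact hzvm h
        · exact f2 z hz ⟨h, hz2⟩
      obtain ⟨b', hb'B, hb'v, hb'vm⟩ := f3
      -- a white above v
      have f4 : ∃ w3 ∈ W, v < w3 := by
        by_contra h4
        push_neg at h4
        have hωT1 : v ≤ ω₀ := T1.min'_le ω₀ (Finset.mem_filter.2
          ⟨hω₀, lt_of_le_of_lt (B.min'_le β1₀ hβ1₀) hltb1₀⟩)
        set T4 := B.filter (fun b => v < b) with hT4def
        have hT4ne : T4.Nonempty := ⟨β2₀, Finset.mem_filter.2 ⟨hβ2₀, by omega⟩⟩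
        set bc := T4.min' hT4ne with hbcdef
        have hbcT4 : bc ∈ T4 := T4.min'_mem hT4ne
        have hbcB : bc ∈ B := (Finset.mem_filter.1 hbcT4).1
        have hvbc : v < bc := (Finset.mem_filter.1 hbcT4).2
        refine hB ⟨vm, hvmB, v, hvW, bc, hbcB, ⟨hvmv, hvbc⟩, ?_⟩
        rintro z hz hzv ⟨hz1, hz2⟩
        rcases Nat.lt_trichotomy z v with h | h | h
        · exact f2 z hz ⟨hz1, h⟩
        · exact hzv h
        · rcases Finset.mem_union.1 hz with hzW | hzB
          · exact absurd (h4 z hzW) (by omega)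
          · exact absurd (T4.min'_le z (Finset.mem_filter.2 ⟨hzB, h⟩)) (by omega)
      obtain ⟨w3, hw3W, hvw3⟩ := f4
      -- child patterns
      have huvm' : u ≠ vm := by
        intro hc
        have h1 : u ≤ b' := B.min'_le b' hb'B
        have h2 : b' ≤ vm := T2.le_max' b' (Finset.mem_filter.2 ⟨hb'B, hb'v⟩)
        omega
      have f5 : PW (W.erase v) (B.erase vm) := by
        refine ⟨m, Finset.mem_erase.2 ⟨by omega, hmW⟩, b',
          Finset.mem_erase.2 ⟨hb'vm, hb'B⟩, w3,
          Finset.mem_erase.2 ⟨by omega, hw3W⟩, ?_, by omega⟩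
        have : u ≤ b' := B.min'_le b' hb'B
        omega
      have f6 : PW (B.erase vm) (W.erase v) := by
        by_cases hcase : ∃ ω' ∈ W, v < ω' ∧ ∃ b'' ∈ B, ω' < b''
        · obtain ⟨ω', hω'W, hvω', b'', hb''B, hω'b''⟩ := hcase
          refine ⟨u, Finset.mem_erase.2 ⟨huvm', huB⟩, ω',
            Finset.mem_erase.2 ⟨by omega, hω'W⟩, b'',
            Finset.mem_erase.2 ⟨by omega, hb''B⟩, by omega, hω'b''⟩
        · exfalso
          have hωT1 : v ≤ ω₀ := T1.min'_le ω₀ (Finset.mem_filter.2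
            ⟨hω₀, lt_of_le_of_lt (B.min'_le β1₀ hβ1₀) hltb1₀⟩)
          have hωv : ω₀ = v := by
            rcases eq_or_lt_of_le hωT1 with h | h
            · exact h.symm
            · exact absurd ⟨ω₀, hω₀, h, β2₀, hβ2₀, hltb2₀⟩ hcase
          set T4 := B.filter (fun b => v < b) with hT4def
          have hT4ne : T4.Nonempty := ⟨β2₀, Finset.mem_filter.2 ⟨hβ2₀, hωv ▸ hltb2₀⟩⟩
          set bc := T4.min' hT4ne with hbcdef
          have hbcT4 : bc ∈ T4 := T4.min'_mem hT4ne
          have hbcB : bc ∈ B := (Finset.mem_filter.1 hbcT4).1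
          have hvbc : v < bc := (Finset.mem_filter.1 hbcT4).2
          refine hB ⟨vm, hvmB, v, hvW, bc, hbcB, ⟨hvmv, hvbc⟩, ?_⟩
          rintro z hz hzv ⟨hz1, hz2⟩
          rcases Nat.lt_trichotomy z v with h | h | h
          · exact f2 z hz ⟨hz1, h⟩
          · exact hzv h
          · rcases Finset.mem_union.1 hz with hzW | hzB
            · exact hcase ⟨z, hzW, h, bc, hbcB, hz2⟩
            · exact absurd (T4.min'_le z (Finset.mem_filter.2 ⟨hzB, h⟩)) (by omega)
      -- recurse and extend
      have hcard1 : (B.erase vm).card ≤ n := by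
        rw [Finset.card_erase_of_mem hvmB]
        have : 0 < B.card := Finset.card_pos.2 hBne
        omega
      have hcard2 : (W.erase v).card = (B.erase vm).card := by
        rw [Finset.card_erase_of_mem hvW, Finset.card_erase_of_mem hvmB, hcard]
      obtain ⟨Φc, Φc', hfc, hfc', hzc⟩ := IH (W.erase v) (B.erase vm) hcard1
        (hd.mono (Finset.erase_subset _ _) (Finset.erase_subset _ _)) hcard2 f5 f6
      have hvmfresh : vm ∉ (W.erase v) ∪ (B.erase vm) := by
        simp only [Finset.mem_union, Finset.mem_erase, not_or, not_and]
        exact ⟨fun _ h => Finset.disjoint_right.1 hd hvmB h, fun hne => absurd rfl hne⟩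
      have hvfresh : v ∉ (W.erase v) ∪ (B.erase vm) := by
        simp only [Finset.mem_union, Finset.mem_erase, not_or, not_and]
        exact ⟨fun hne => absurd rfl hne, fun _ h => Finset.disjoint_left.1 hd hvW h⟩
      have key : ∀ Ψ, Feas (W.erase v) (B.erase vm) Ψ →
          Feas W B (insert (vm, v) Ψ) ∧
          zetaA W (insert (vm, v) Ψ) = zetaA (W.erase v) Ψ - 1 := by
        intro Ψ hΨ
        constructor
        · have := feas_insert (u := vm) (v := v) hvmv hvmfresh hvfresh
            (by
              intro z hz
              have : z ∈ W ∪ B := by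
                rcases Finset.mem_union.1 hz with h | h
                · exact Finset.mem_union_left _ (Finset.mem_of_mem_erase h)
                · exact Finset.mem_union_right _ (Finset.mem_of_mem_erase h)
              exact f2 z this)
            hΨ (Or.inr ⟨(Finset.insert_erase hvW).symm, (Finset.insert_erase hvmB).symm⟩)
          exact this
        · have hnm : (vm, v) ∉ Ψ := fun hcm => (hΨ.fresh hvmfresh _ hcm).1 rfl
          rw [zetaA_insert _ _ _ _ hnm, if_neg (Finset.disjoint_right.1 hd hvmB)]
          have : zetaA W Ψ = zetaA (W.erase v) Ψ := by
            apply zetaA_congr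
            intro p hp
            rcases Finset.mem_union.1 (hΨ.mem_ground p hp).1 with h | h
            · exact iff_of_true (Finset.mem_of_mem_erase h) h
            · exact iff_of_false
                (fun hcm => Finset.disjoint_left.1 hd hcm (Finset.mem_of_mem_erase h))
                (fun hcm => Finset.disjoint_left.1 hd (Finset.mem_of_mem_erase hcm)
                  (Finset.mem_of_mem_erase h))
          rw [this]; ring
      obtain ⟨hf1, hz1⟩ := key Φc hfc
      obtain ⟨hf2, hz2⟩ := key Φc' hfc'
      exact ⟨_, _, hf1, hf2, by rw [hz1, hz2]; omega⟩
    · -- minimum is black (mirror)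
      set u := W.min' hWne with hudef
      have huW : u ∈ W := W.min'_mem hWne
      have hmu : m < u := lt_of_le_of_ne (hmmin u (Finset.mem_union_left _ huW))
        (fun hc => Finset.disjoint_right.1 hd (hc ▸ hmB) huW)
      set T1 := B.filter (fun b => u < b) with hT1def
      have hT1ne : T1.Nonempty :=
        ⟨b₀, Finset.mem_filter.2 ⟨hb₀, lt_of_le_of_lt (W.min'_le w1₀ hw1₀) hlt1₀⟩⟩
      set v := T1.min' hT1ne with hvdef
      have hvT1 : v ∈ T1 := T1.min'_mem hT1ne
      have hvB : v ∈ B := (Finset.mem_filter.1 hvT1).1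
      have huv : u < v := (Finset.mem_filter.1 hvT1).2
      set T2 := W.filter (fun w => w < v) with hT2def
      have hT2ne : T2.Nonempty := ⟨u, Finset.mem_filter.2 ⟨huW, huv⟩⟩
      set vm := T2.max' hT2ne with hvmdef
      have hvmT2 : vm ∈ T2 := T2.max'_mem hT2ne
      have hvmW : vm ∈ W := (Finset.mem_filter.1 hvmT2).1
      have hvmv : vm < v := (Finset.mem_filter.1 hvmT2).2
      have huvm : u ≤ vm := T2.le_max' u (Finset.mem_filter.2 ⟨huW, huv⟩)
      have f2 : ∀ z ∈ W ∪ B, ¬(vm < z ∧ z < v) := by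
        rintro z hz ⟨hz1, hz2⟩
        rcases Finset.mem_union.1 hz with hzW | hzB
        · have : z ∈ T2 := Finset.mem_filter.2 ⟨hzW, hz2⟩
          exact absurd (T2.le_max' z this) (by omega)
        · have : z ∈ T1 := Finset.mem_filter.2 ⟨hzB, lt_of_le_of_lt huvm hz1⟩
          exact absurd (T1.min'_le z this) (by omega)
      have f3 : ∃ w' ∈ W, w' < v ∧ w' ≠ vm := by
        by_contra h3
        push_neg at h3
        set T3 := (W ∪ B).filter (fun z => z < vm) with hT3def
        have hT3ne : T3.Nonempty := ⟨m, Finset.mem_filter.2 ⟨hmG,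
          lt_of_le_of_ne (hmmin vm (Finset.mem_union_left _ hvmW))
            (fun hc => Finset.disjoint_right.1 hd (hc ▸ hmB) hvmW)⟩⟩
        set wb := T3.max' hT3ne with hwbdef
        have hwbT3 : wb ∈ T3 := T3.max'_mem hT3ne
        have hwbG : wb ∈ W ∪ B := (Finset.mem_filter.1 hwbT3).1
        have hwbvm : wb < vm := (Finset.mem_filter.1 hwbT3).2
        have hwbB : wb ∈ B := by
          rcases Finset.mem_union.1 hwbG with h | h
          · exact absurd (h3 wb h (hwbvm.trans hvmv)) (by omega)
          · exact h
        refine hB ⟨wb, hwbB, vm, hvmW, v, hvB, ⟨hwbvm, hvmv⟩, ?_⟩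
        rintro z hz hzvm ⟨hz1, hz2⟩
        rcases Nat.lt_trichotomy z vm with h | h | h
        · exact absurd (T3.le_max' z (Finset.mem_filter.2 ⟨hz, h⟩)) (by omega)
        · exact hzvm h
        · exact f2 z hz ⟨h, hz2⟩
      obtain ⟨w', hw'W, hw'v, hw'vm⟩ := f3
      have f4 : ∃ b3 ∈ B, v < b3 := by
        by_contra h4
        push_neg at h4
        have hbT1 : v ≤ b₀ := T1.min'_le b₀ (Finset.mem_filter.2
          ⟨hb₀, lt_of_le_of_lt (W.min'_le w1₀ hw1₀) hlt1₀⟩)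
        set T4 := W.filter (fun w => v < w) with hT4def
        have hT4ne : T4.Nonempty := ⟨w2₀, Finset.mem_filter.2 ⟨hw2₀, by omega⟩⟩
        set wc := T4.min' hT4ne with hwcdef
        have hwcT4 : wc ∈ T4 := T4.min'_mem hT4ne
        have hwcW : wc ∈ W := (Finset.mem_filter.1 hwcT4).1
        have hvwc : v < wc := (Finset.mem_filter.1 hwcT4).2
        refine hA ⟨vm, hvmW, v, hvB, wc, hwcW, ⟨hvmv, hvwc⟩, ?_⟩
        rintro z hz hzv ⟨hz1, hz2⟩
        rcases Nat.lt_trichotomy z v with h | h | h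
        · exact f2 z hz ⟨hz1, h⟩
        · exact hzv h
        · rcases Finset.mem_union.1 hz with hzW | hzB
          · exact absurd (T4.min'_le z (Finset.mem_filter.2 ⟨hzW, h⟩)) (by omega)
          · exact absurd (h4 z hzB) (by omega)
      obtain ⟨b3, hb3B, hvb3⟩ := f4
      have huvm' : u ≠ vm := by
        intro hc
        have h1 : u ≤ w' := W.min'_le w' hw'W
        have h2 : w' ≤ vm := T2.le_max' w' (Finset.mem_filter.2 ⟨hw'W, hw'v⟩)
        omega
      have f5 : PW (W.erase vm) (B.erase v) := by
        by_cases hcase : ∃ β ∈ B, v < β ∧ ∃ w'' ∈ W, β < w''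
        · obtain ⟨β, hβB, hvβ, w'', hw''W, hβw''⟩ := hcase
          refine ⟨u, Finset.mem_erase.2 ⟨huvm', huW⟩, β,
            Finset.mem_erase.2 ⟨by omega, hβB⟩, w'',
            Finset.mem_erase.2 ⟨by omega, hw''W⟩, by omega, hβw''⟩
        · exfalso
          have hbT1 : v ≤ b₀ := T1.min'_le b₀ (Finset.mem_filter.2
            ⟨hb₀, lt_of_le_of_lt (W.min'_le w1₀ hw1₀) hlt1₀⟩)
          have hbv : b₀ = v := by
            rcases eq_or_lt_of_le hbT1 with h | h
            · exact h.symm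
            · exact absurd ⟨b₀, hb₀, h, w2₀, hw2₀, hlt2₀⟩ hcase
          set T4 := W.filter (fun w => v < w) with hT4def
          have hT4ne : T4.Nonempty := ⟨w2₀, Finset.mem_filter.2 ⟨hw2₀, hbv ▸ hlt2₀⟩⟩
          set wc := T4.min' hT4ne with hwcdef
          have hwcT4 : wc ∈ T4 := T4.min'_mem hT4ne
          have hwcW : wc ∈ W := (Finset.mem_filter.1 hwcT4).1
          have hvwc : v < wc := (Finset.mem_filter.1 hwcT4).2
          refine hA ⟨vm, hvmW, v, hvB, wc, hwcW, ⟨hvmv, hvwc⟩, ?_⟩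
          rintro z hz hzv ⟨hz1, hz2⟩
          rcases Nat.lt_trichotomy z v with h | h | h
          · exact f2 z hz ⟨hz1, h⟩
          · exact hzv h
          · rcases Finset.mem_union.1 hz with hzW | hzB
            · exact absurd (T4.min'_le z (Finset.mem_filter.2 ⟨hzW, h⟩)) (by omega)
            · exact hcase ⟨z, hzB, h, wc, hwcW, hz2⟩
      have f6 : PW (B.erase v) (W.erase vm) := by
        refine ⟨m, Finset.mem_erase.2 ⟨by omega, hmB⟩, w',
          Finset.mem_erase.2 ⟨hw'vm, hw'W⟩, b3,
          Finset.mem_erase.2 ⟨by omega, hb3B⟩, ?_, by omega⟩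
        have : u ≤ w' := W.min'_le w' hw'W
        omega
      have hcard1 : (B.erase v).card ≤ n := by
        rw [Finset.card_erase_of_mem hvB]
        have : 0 < B.card := Finset.card_pos.2 hBne
        omega
      have hcard2 : (W.erase vm).card = (B.erase v).card := by
        rw [Finset.card_erase_of_mem hvB, Finset.card_erase_of_mem hvmW, hcard]
      obtain ⟨Φc, Φc', hfc, hfc', hzc⟩ := IH (W.erase vm) (B.erase v) hcard1
        (hd.mono (Finset.erase_subset _ _) (Finset.erase_subset _ _)) hcard2 f5 f6
      have hvmfresh : vm ∉ (W.erase vm) ∪ (B.erase v) := by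
        simp only [Finset.mem_union, Finset.mem_erase, not_or, not_and]
        exact ⟨fun hne => absurd rfl hne, fun _ h => Finset.disjoint_left.1 hd hvmW h⟩
      have hvfresh : v ∉ (W.erase vm) ∪ (B.erase v) := by
        simp only [Finset.mem_union, Finset.mem_erase, not_or, not_and]
        exact ⟨fun _ h => Finset.disjoint_right.1 hd hvB h, fun hne => absurd rfl hne⟩
      have key : ∀ Ψ, Feas (W.erase vm) (B.erase v) Ψ →
          Feas W B (insert (vm, v) Ψ) ∧
          zetaA W (insert (vm, v) Ψ) = zetaA (W.erase vm) Ψ + 1 := by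
        intro Ψ hΨ
        constructor
        · have := feas_insert (u := vm) (v := v) hvmv hvmfresh hvfresh
            (by
              intro z hz
              have : z ∈ W ∪ B := by
                rcases Finset.mem_union.1 hz with h | h
                · exact Finset.mem_union_left _ (Finset.mem_of_mem_erase h)
                · exact Finset.mem_union_right _ (Finset.mem_of_mem_erase h)
              exact f2 z this)
            hΨ (Or.inl ⟨(Finset.insert_erase hvmW).symm, (Finset.insert_erase hvB).symm⟩)
          exact this
        · have hnm : (vm, v) ∉ Ψ := fun hcm => (hΨ.fresh hvmfresh _ hcm).1 rfl
          rw [zetaA_insert _ _ _ _ hnm, if_pos hvmW]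
          have : zetaA W Ψ = zetaA (W.erase vm) Ψ := by
            apply zetaA_congr
            intro p hp
            rcases Finset.mem_union.1 (hΨ.mem_ground p hp).1 with h | h
            · exact iff_of_true (Finset.mem_of_mem_erase h) h
            · exact iff_of_false
                (fun hcm => Finset.disjoint_left.1 hd hcm (Finset.mem_of_mem_erase h))
                (fun hcm => Finset.disjoint_left.1 hd (Finset.mem_of_mem_erase hcm)
                  (Finset.mem_of_mem_erase h))
          rw [this]
      obtain ⟨hf1, hz1⟩ := key Φc hfc
      obtain ⟨hf2, hz2⟩ := key Φc' hfc'
      exact ⟨_, _, hf1, hf2, by rw [hz1, hz2]; omega⟩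

end NC
namespace NC
open Finset

/-- The general two-matchings theorem: non-separated bicolored configurations
(with at least as many whites as blacks) admit two feasible arc systems with
different `zetaA`. -/
lemma two_feas {Wst Bst : Finset ℕ} (hd : Disjoint Wst Bst) (hc : Bst.card ≤ Wst.card)
    (hPW : PW Wst Bst) (hside : Bst.card < Wst.card ∨ PW Bst Wst) :
    ∃ Φ Φ', Feas Wst Bst Φ ∧ Feas Wst Bst Φ' ∧ zetaA Wst Φ ≠ zetaA Wst Φ' := by
  obtain ⟨w1₀, hw1₀, b₀, hb₀, w2₀, hw2₀, hlt1₀, hlt2₀⟩ := hPW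
  have hGne : (Wst ∪ Bst).Nonempty := ⟨w1₀, Finset.mem_union_left _ hw1₀⟩
  set K := (Wst ∪ Bst).max' hGne + 1 with hKdef
  have hK : ∀ z ∈ Wst ∪ Bst, z < K := by
    intro z hz
    have := (Wst ∪ Bst).le_max' z hz
    omega
  set e := Wst.card - Bst.card with hedef
  set Ph := (Finset.range e).image (fun i => K + i) with hPhdef
  have hPhmem : ∀ x ∈ Ph, K ≤ x := by
    intro x hx
    obtain ⟨i, -, rfl⟩ := Finset.mem_image.1 hx
    omega
  have hPhW : Disjoint Wst Ph := by
    rw [Finset.disjoint_left]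
    intro x hx hx'
    exact absurd (hPhmem x hx') (by have := hK x (Finset.mem_union_left _ hx); omega)
  have hPhB : Disjoint Bst Ph := by
    rw [Finset.disjoint_left]
    intro x hx hx'
    exact absurd (hPhmem x hx') (by have := hK x (Finset.mem_union_right _ hx); omega)
  set B' := Bst ∪ Ph with hB'def
  have hdisj' : Disjoint Wst B' := Finset.disjoint_union_right.2 ⟨hd, hPhW⟩
  have hPhcard : Ph.card = e := by
    rw [hPhdef, Finset.card_image_of_injective _ (fun a b h => by omega), Finset.card_range]
  have hcard' : Wst.card = B'.card := by
    rw [hB'def, Finset.card_union_of_disjoint hPhB, hPhcard]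
    omega
  have hPW' : PW Wst B' :=
    ⟨w1₀, hw1₀, b₀, Finset.mem_union_left _ hb₀, w2₀, hw2₀, hlt1₀, hlt2₀⟩
  have hPB' : PW B' Wst := by
    rcases hside with he | hPB
    · have heK : K ∈ Ph := Finset.mem_image.2 ⟨0, Finset.mem_range.2 (by omega), by omega⟩
      exact ⟨b₀, Finset.mem_union_left _ hb₀, w2₀, hw2₀, K, Finset.mem_union_right _ heK,
        hlt2₀, hK w2₀ (Finset.mem_union_left _ hw2₀)⟩
    · obtain ⟨b1, hb1, w, hw, b2, hb2, h1, h2⟩ := hPB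
      exact ⟨b1, Finset.mem_union_left _ hb1, w, hw, b2, Finset.mem_union_left _ hb2, h1, h2⟩
  obtain ⟨Φa, Φa', hfa, hfa', hza⟩ :=
    two_feas_zero B'.card Wst B' le_rfl hdisj' hcard' hPW' hPB'
  -- pull back
  have hp1ph : ∀ {Ψ : Finset (ℕ × ℕ)}, Feas Wst B' Ψ → ∀ p ∈ Ψ, p.1 ∉ Ph := by
    intro Ψ hΨ p hp hmem
    rcases hΨ.colors p hp with ⟨h1, -⟩ | ⟨-, h2⟩
    · exact Finset.disjoint_left.1 hPhW h1 hmem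
    · have := hK p.2 (Finset.mem_union_left _ h2)
      have := hPhmem p.1 hmem
      have := hΨ.lt p hp
      omega
  have hpull : ∀ Ψ : Finset (ℕ × ℕ), Feas Wst B' Ψ →
      Feas Wst Bst (Ψ.filter (fun p => p.2 ∉ Ph)) ∧
      zetaA Wst Ψ = zetaA Wst (Ψ.filter (fun p => p.2 ∉ Ph)) + e := by
    intro Ψ hΨ
    set Φ := Ψ.filter (fun p => p.2 ∉ Ph) with hΦdef
    set D := Ψ.filter (fun p => ¬ p.2 ∉ Ph) with hDdef
    have hDmem : ∀ p ∈ D, p.2 ∈ Ph := by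
      intro p hp
      have := (Finset.mem_filter.1 hp).2
      tauto
    have hDW : ∀ p ∈ D, p.1 ∈ Wst := by
      intro p hp
      have hpΨ := (Finset.mem_filter.1 hp).1
      rcases hΨ.colors p hpΨ with ⟨h1, -⟩ | ⟨-, h2⟩
      · exact h1
      · exact absurd (hDmem p hp) (Finset.disjoint_left.1 hPhW h2)
    constructor
    · constructor
      · exact fun p hp => hΨ.lt p (Finset.mem_filter.1 hp).1
      · intro p hp
        obtain ⟨hpΨ, hp2⟩ := Finset.mem_filter.1 hp
        rcases hΨ.colors p hpΨ with ⟨h1, h2⟩ | ⟨h1, h2⟩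
        · rcases Finset.mem_union.1 h2 with h | h
          · exact Or.inl ⟨h1, h⟩
          · exact absurd h hp2
        · rcases Finset.mem_union.1 h1 with h | h
          · exact Or.inr ⟨h, h2⟩
          · exact absurd h (hp1ph hΨ p hpΨ)
      · intro b hb
        obtain ⟨p, hp, hcov⟩ := hΨ.coverB b (Finset.mem_union_left _ hb)
        refine ⟨p, Finset.mem_filter.2 ⟨hp, ?_⟩, hcov⟩
        intro hmem
        rcases hcov with h | h
        · -- p.1 = b, so p.2 ∈ Ph with p.2 ∈ Wst (colors) impossible
          rcases hΨ.colors p hp with ⟨h1, -⟩ | ⟨-, h2⟩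
          · exact Finset.disjoint_left.1 hd (h ▸ h1) hb
          · exact Finset.disjoint_left.1 hPhW h2 hmem
        · exact Finset.disjoint_left.1 hPhB (h ▸ hb) (h ▸ hmem)
      · exact fun p hp q hq hne =>
          hΨ.pdisj p (Finset.mem_filter.1 hp).1 q (Finset.mem_filter.1 hq).1 hne
      · exact fun p hp q hq =>
          hΨ.noncross p (Finset.mem_filter.1 hp).1 q (Finset.mem_filter.1 hq).1
      · intro w hw hwfree p hp
        by_cases hwfreeΨ : ∀ q ∈ Ψ, q.1 ≠ w ∧ q.2 ≠ w
        · exact hΨ.exposure w hw hwfreeΨ p (Finset.mem_filter.1 hp).1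
        · push_neg at hwfreeΨ
          obtain ⟨q, hq, hqcov⟩ := hwfreeΨ
          have hqD : q.2 ∈ Ph := by
            by_contra hq2
            exact absurd (hwfree q (Finset.mem_filter.2 ⟨hq, hq2⟩))
              (by tauto)
          have hq1w : q.1 = w := by
            rcases Classical.em (q.1 = w) with h | h
            · exact h
            · exfalso
              have : q.2 = w := by tauto
              exact Finset.disjoint_left.1 hPhW (this ▸ hw) (this ▸ hqD)
          rintro ⟨h1, h2⟩
          refine hΨ.noncross p (Finset.mem_filter.1 hp).1 q hq ⟨hq1w ▸ h1, hq1w ▸ h2, ?_⟩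
          have hp2 : p.2 ∈ Wst ∪ Bst := by
            obtain ⟨hpΨ, hpf⟩ := Finset.mem_filter.1 hp
            rcases Finset.mem_union.1 (hΨ.mem_ground p hpΨ).2 with h | h
            · exact Finset.mem_union_left _ h
            · rcases Finset.mem_union.1 h with h | h
              · exact Finset.mem_union_right _ h
              · exact absurd h hpf
          exact lt_of_lt_of_le (hK p.2 hp2) (hPhmem q.2 hqD)
    · -- zeta relation
      have hunion : Φ ∪ D = Ψ := Finset.filter_union_filter_not_eq _ Ψ
      have hdisjΦD : Disjoint Φ D := Finset.disjoint_filter_filter_not Ψ Ψ _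
      have hDcard : D.card = e := by
        rw [← hPhcard]
        apply Finset.card_bij (fun p _ => p.2)
        · exact fun p hp => hDmem p hp
        · intro p hp q hq he
          by_contra hne
          exact (hΨ.pdisj p (Finset.mem_filter.1 hp).1 q (Finset.mem_filter.1 hq).1 hne).2.2.2 he
        · intro ph hph
          obtain ⟨q, hq, hcov⟩ := hΨ.coverB ph (Finset.mem_union_right _ hph)
          have hq2 : q.2 = ph := by
            rcases hcov with h | h
            · exact absurd (h ▸ hph) (hp1ph hΨ q hq)
            · exact h
          exact ⟨q, Finset.mem_filter.2 ⟨hq, by rw [hq2]; tauto⟩, hq2⟩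
      have hsplit : ∀ P : ℕ × ℕ → Prop, ∀ inst : DecidablePred P,
          (Ψ.filter P).card = (Φ.filter P).card + (D.filter P).card := by
        intro P inst
        rw [← hunion, Finset.filter_union, Finset.card_union_of_disjoint
          (hdisjΦD.mono (Finset.filter_subset _ _) (Finset.filter_subset _ _))]
      unfold zetaA
      rw [hsplit _ _, hsplit _ _]
      have hD1 : D.filter (fun p => p.1 ∈ Wst) = D :=
        Finset.filter_true_of_mem (fun p hp => hDW p hp)
      have hD2 : D.filter (fun p => p.1 ∉ Wst) = ∅ :=
        Finset.filter_false_of_mem (fun p hp hc => hc (hDW p hp))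
      rw [hD1, hD2, hDcard]
      simp only [Finset.card_empty]
      push_cast
      ring
  obtain ⟨hf1, hz1⟩ := hpull Φa hfa
  obtain ⟨hf2, hz2⟩ := hpull Φa' hfa'
  exact ⟨_, _, hf1, hf2, fun hc => hza (by rw [hz1, hz2, hc])⟩

end NC
namespace NC
open Finset

/-- Embedding of arcs into couples: the numerically larger column first
(columns are in decreasing order in `cLT`). -/
def emap : ℕ × ℕ → Elt × Elt := fun p => (Sum.inr p.2, Sum.inr p.1)

lemma emap_inj : Function.Injective emap := by
  intro p q h
  simp only [emap, Prod.mk.injEq, Sum.inr.injEq] at h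
  exact Prod.ext h.2 h.1

lemma translate {m n : ℕ} (S : Cortege m n) (Wr Wc Bc : Finset ℕ)
    (hw : S.whites = Wr.image Sum.inl ∪ Wc.image Sum.inr)
    (hb : S.blacks = Bc.image Sum.inr)
    (hd : Disjoint Wc Bc)
    (hcards : Wc.card = Bc.card + Wr.card)
    (Φ : Finset (ℕ × ℕ)) (hΦ : Feas Wc Bc Φ) :
    ∃ M, IsFeasible S M ∧ (zetaWhite S M : ℤ) - zetaBlack S M = zetaA Wc Φ := by
  classical
  -- membership characterizations
  have hwl : ∀ a : ℕ, ((Sum.inl a : Elt) ∈ S.whites ↔ a ∈ Wr) := by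
    intro a; rw [hw]; simp
  have hwr : ∀ a : ℕ, ((Sum.inr a : Elt) ∈ S.whites ↔ a ∈ Wc) := by
    intro a; rw [hw]; simp
  have hbl : ∀ a : ℕ, ((Sum.inl a : Elt) ∉ S.blacks) := by
    intro a; rw [hb]; simp
  have hbr : ∀ a : ℕ, ((Sum.inr a : Elt) ∈ S.blacks ↔ a ∈ Bc) := by
    intro a; rw [hb]; simp
  have hgl : ∀ a : ℕ, ((Sum.inl a : Elt) ∈ S.ground ↔ a ∈ Wr) := by
    intro a
    rw [Cortege.ground, Finset.mem_union, hwl]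
    exact ⟨fun h => h.elim id (fun h => absurd h (hbl a)), Or.inl⟩
  have hgr : ∀ a : ℕ, ((Sum.inr a : Elt) ∈ S.ground ↔ a ∈ Wc ∨ a ∈ Bc) := by
    intro a; rw [Cortege.ground, Finset.mem_union, hwr, hbr]
  -- counting
  have hΦcard : Φ.card = Bc.card := by
    apply Finset.card_bij (fun p _ => if p.1 ∈ Bc then p.1 else p.2)
    · intro p hp
      rcases hΦ.colors p hp with ⟨h1, h2⟩ | ⟨h1, h2⟩
      · rw [if_neg (Finset.disjoint_left.1 hd h1)]; exact h2
      · rw [if_pos h1]; exact h1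
    · intro p hp q hq he
      by_contra hne
      obtain ⟨d1, d2, d3, d4⟩ := hΦ.pdisj p hp q hq hne
      by_cases h1 : p.1 ∈ Bc <;> by_cases h2 : q.1 ∈ Bc <;>
        simp only [if_pos, if_neg, h1, h2, if_true, if_false] at he <;> tauto
    · intro b hbm
      obtain ⟨p, hp, hcov⟩ := hΦ.coverB b hbm
      rcases hcov with h | h
      · exact ⟨p, hp, by rw [if_pos (h ▸ hbm), h]⟩
      · refine ⟨p, hp, ?_⟩
        have : p.1 ∉ Bc := by
          rcases hΦ.colors p hp with ⟨h1, -⟩ | ⟨-, h2⟩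
          · exact Finset.disjoint_left.1 hd h1
          · exact fun _ => absurd hbm (Finset.disjoint_left.1 hd (h ▸ h2))
        rw [if_neg this, h]
  set P : ℕ → Prop := fun w => ∀ p ∈ Φ, p.1 ≠ w ∧ p.2 ≠ w with hPdef
  have hPdec : DecidablePred P := fun w => inferInstanceAs (Decidable (∀ p ∈ Φ, _ ∧ _))
  set ECols := Wc.filter P with hEdef
  set MCols := Wc.filter (fun w => ¬ P w) with hMdef
  have hMcard : MCols.card = Φ.card := by
    symm
    apply Finset.card_bij (fun p _ => if p.1 ∈ Wc then p.1 else p.2)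
    · intro p hp
      rcases hΦ.colors p hp with ⟨h1, h2⟩ | ⟨h1, h2⟩
      · rw [if_pos h1]
        refine Finset.mem_filter.2 ⟨h1, fun hP => (hP p hp).1 rfl⟩
      · rw [if_neg (Finset.disjoint_right.1 hd h1)]
        refine Finset.mem_filter.2 ⟨h2, fun hP => (hP p hp).2 rfl⟩
    · intro p hp q hq he
      by_contra hne
      obtain ⟨d1, d2, d3, d4⟩ := hΦ.pdisj p hp q hq hne
      by_cases h1 : p.1 ∈ Wc <;> by_cases h2 : q.1 ∈ Wc <;>
        simp only [if_pos, if_neg, h1, h2, if_true, if_false] at he <;> tauto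
    · intro w hwm
      obtain ⟨hwWc, hnP⟩ := Finset.mem_filter.1 hwm
      have : ∃ p ∈ Φ, p.1 = w ∨ p.2 = w := by
        by_contra hcon
        push_neg at hcon
        exact hnP (fun p hp => ⟨(hcon p hp).1, (hcon p hp).2⟩)
      obtain ⟨p, hp, hcov⟩ := this
      rcases hcov with h | h
      · exact ⟨p, hp, by rw [if_pos (h ▸ hwWc), h]⟩
      · refine ⟨p, hp, ?_⟩
        have : p.1 ∉ Wc := by
          rcases hΦ.colors p hp with ⟨h1, h2⟩ | ⟨h1, -⟩
          · exact fun _ => absurd (h ▸ h2) (Finset.disjoint_left.1 hd hwWc)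
          · exact Finset.disjoint_right.1 hd h1
        rw [if_neg this, h]
  have hEcard : ECols.card = Wr.card := by
    have := Finset.card_filter_add_card_filter_not (s := Wc) (p := P)
    rw [← hEdef, ← hMdef] at this
    rw [hMcard, hΦcard] at this
    omega
  set rowEmb := Wr.orderEmbOfFin (rfl : Wr.card = Wr.card) with hrowdef
  set expEmb := ECols.orderEmbOfFin hEcard with hexpdef
  have hrowmem : ∀ i, rowEmb i ∈ Wr := fun i => Finset.orderEmbOfFin_mem _ _ _
  have hexpmemE : ∀ i, expEmb i ∈ ECols := fun i => Finset.orderEmbOfFin_mem _ _ _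
  have hexpmem : ∀ i, expEmb i ∈ Wc := fun i => (Finset.mem_filter.1 (hexpmemE i)).1
  have hexpP : ∀ i, P (expEmb i) := fun i => (Finset.mem_filter.1 (hexpmemE i)).2
  have hrowsurj : ∀ a ∈ Wr, ∃ i, rowEmb i = a := by
    intro a ha
    have : a ∈ Set.range rowEmb := by
      rw [hrowdef, Finset.range_orderEmbOfFin]; exact_mod_cast ha
    exact this
  have hexpsurj : ∀ a ∈ ECols, ∃ i, expEmb i = a := by
    intro a ha
    have : a ∈ Set.range expEmb := by
      rw [hexpdef, Finset.range_orderEmbOfFin]; exact_mod_cast ha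
    exact this
  set cross : Fin Wr.card → Elt × Elt :=
    fun i => (Sum.inl (rowEmb i), Sum.inr (expEmb i)) with hcrossdef
  set M : Finset (Elt × Elt) := Finset.univ.image cross ∪ Φ.image emap with hMdef2
  have hmemM : ∀ p : Elt × Elt, p ∈ M ↔ (∃ i, cross i = p) ∨ (∃ q ∈ Φ, emap q = p) := by
    intro p
    simp [hMdef2]
  refine ⟨M, ⟨?_, ?_, ?_, ?_⟩, ?_⟩
  · -- part 1: ground membership and cLT
    intro p hp
    rcases (hmemM p).1 hp with ⟨i, rfl⟩ | ⟨q, hq, rfl⟩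
    · exact ⟨(hgl _).2 (hrowmem i), (hgr _).2 (Or.inl (hexpmem i)), trivial⟩
    · refine ⟨?_, ?_, hΦ.lt q hq⟩
      · rcases hΦ.colors q hq with ⟨-, h2⟩ | ⟨-, h2⟩
        · exact (hgr _).2 (Or.inr h2)
        · exact (hgr _).2 (Or.inl h2)
      · rcases hΦ.colors q hq with ⟨h1, -⟩ | ⟨h1, -⟩
        · exact (hgr _).2 (Or.inl h1)
        · exact (hgr _).2 (Or.inr h1)
  · -- part 2: perfect matching
    intro y hy
    obtain a | c := y
    · have haWr : a ∈ Wr := (hgl a).1 hy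
      obtain ⟨i, rfl⟩ := hrowsurj a haWr
      refine ⟨cross i, ⟨(hmemM _).2 (Or.inl ⟨i, rfl⟩), Or.inl rfl⟩, ?_⟩
      rintro p ⟨hp, hcov⟩
      rcases (hmemM p).1 hp with ⟨j, rfl⟩ | ⟨q, hq, rfl⟩
      · rcases hcov with h | h
        · rw [show j = i from (rowEmb.injective (Sum.inl.inj h))]
        · exact absurd h (by simp [hcrossdef])
      · rcases hcov with h | h <;> exact absurd h (by simp [emap])
    · rcases (hgr c).1 hy with hcW | hcB
      · by_cases hPc : P c
        · have hcE : c ∈ ECols := Finset.mem_filter.2 ⟨hcW, hPc⟩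
          obtain ⟨i, rfl⟩ := hexpsurj c hcE
          refine ⟨cross i, ⟨(hmemM _).2 (Or.inl ⟨i, rfl⟩), Or.inr rfl⟩, ?_⟩
          rintro p ⟨hp, hcov⟩
          rcases (hmemM p).1 hp with ⟨j, rfl⟩ | ⟨q, hq, rfl⟩
          · rcases hcov with h | h
            · exact absurd h (by simp [hcrossdef])
            · rw [show j = i from (expEmb.injective (Sum.inr.inj h))]
          · rcases hcov with h | h
            · exact absurd (Sum.inr.inj h) (hPc q hq).2
            · exact absurd (Sum.inr.inj h) (hPc q hq).1
        · have : ∃ q ∈ Φ, q.1 = c ∨ q.2 = c := by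
            by_contra hcon
            push_neg at hcon
            exact hPc (fun p hp => ⟨(hcon p hp).1, (hcon p hp).2⟩)
          obtain ⟨q0, hq0, hcov0⟩ := this
          refine ⟨emap q0, ⟨(hmemM _).2 (Or.inr ⟨q0, hq0, rfl⟩), ?_⟩, ?_⟩
          · rcases hcov0 with h | h
            · exact Or.inr (by rw [emap, h])
            · exact Or.inl (by rw [emap, h])
          rintro p ⟨hp, hcov⟩
          rcases (hmemM p).1 hp with ⟨j, rfl⟩ | ⟨q, hq, rfl⟩
          · rcases hcov with h | h
            · exact absurd h (by simp [hcrossdef])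
            · have : expEmb j = c := Sum.inr.inj h
              exact absurd (this ▸ hexpP j) hPc
          · have hqq0 : q = q0 := by
              by_contra hne
              obtain ⟨d1, d2, d3, d4⟩ := hΦ.pdisj q hq q0 hq0 hne
              rcases hcov with h | h <;> rcases hcov0 with h0 | h0
              · exact d3 ((Sum.inr.inj h).trans h0.symm)
              · exact d4 ((Sum.inr.inj h).trans h0.symm)
              · exact d1 ((Sum.inr.inj h).trans h0.symm)
              · exact d2 ((Sum.inr.inj h).trans h0.symm)
            rw [hqq0]
      · obtain ⟨q0, hq0, hcov0⟩ := hΦ.coverB c hcB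
        refine ⟨emap q0, ⟨(hmemM _).2 (Or.inr ⟨q0, hq0, rfl⟩), ?_⟩, ?_⟩
        · rcases hcov0 with h | h
          · exact Or.inr (by rw [emap, h])
          · exact Or.inl (by rw [emap, h])
        rintro p ⟨hp, hcov⟩
        rcases (hmemM p).1 hp with ⟨j, rfl⟩ | ⟨q, hq, rfl⟩
        · rcases hcov with h | h
          · exact absurd h (by simp [hcrossdef])
          · exact absurd hcB (Finset.disjoint_left.1 hd ((Sum.inr.inj h) ▸ hexpmem j))
        · have hqq0 : q = q0 := by
            by_contra hne
            obtain ⟨d1, d2, d3, d4⟩ := hΦ.pdisj q hq q0 hq0 hne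
            rcases hcov with h | h <;> rcases hcov0 with h0 | h0
            · exact d3 ((Sum.inr.inj h).trans h0.symm)
            · exact d4 ((Sum.inr.inj h).trans h0.symm)
            · exact d1 ((Sum.inr.inj h).trans h0.symm)
            · exact d2 ((Sum.inr.inj h).trans h0.symm)
          rw [hqq0]
  · -- part 3: colors
    intro p hp
    rcases (hmemM p).1 hp with ⟨i, rfl⟩ | ⟨q, hq, rfl⟩
    · refine ⟨fun h => absurd h (by simp [hcrossdef, sameSide]), fun _ => ?_⟩
      exact iff_of_true ((hwl _).2 (hrowmem i)) ((hwr _).2 (hexpmem i))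
    · refine ⟨fun _ => ?_, fun h => absurd rfl h⟩
      rcases hΦ.colors q hq with ⟨h1, h2⟩ | ⟨h1, h2⟩
      · exact iff_of_false (fun hc => Finset.disjoint_left.1 hd ((hwr _).1 hc) h2)
          (fun hc => Finset.disjoint_left.1 hd h1 ((hbr _).1 hc))
      · exact iff_of_true ((hwr _).2 h2) ((hbr _).2 h1)
  · -- part 4: planarity
    intro p hp p' hp'
    rcases (hmemM p).1 hp with ⟨i, rfl⟩ | ⟨q, hq, rfl⟩ <;>
      rcases (hmemM p').1 hp' with ⟨j, rfl⟩ | ⟨q', hq', rfl⟩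
    · rintro ⟨h1, -, h3⟩
      have hij : i < j := rowEmb.lt_iff_lt.1 h1
      have hji : j < i := expEmb.lt_iff_lt.1 h3
      omega
    · rintro ⟨-, h2, h3⟩
      exact hΦ.exposure (expEmb i) (hexpmem i) (hexpP i) q' hq' ⟨h3, h2⟩
    · rintro ⟨h1, -, -⟩; exact h1
    · rintro ⟨h1, h2, h3⟩
      exact hΦ.noncross q' hq' q hq ⟨h3, h2, h1⟩
  · -- zeta computation
    have hcond : ∀ q ∈ Φ, (sameSide (emap q).1 (emap q).2 ∧ numMin (emap q) ∈ S.whites)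
        ↔ q.1 ∈ Wc := by
      intro q hq
      have hmin : numMin (emap q) = Sum.inr q.1 := by
        rw [emap, numMin, if_neg]
        exact not_le.2 (hΦ.lt q hq)
      rw [hmin]
      constructor
      · rintro ⟨-, h⟩; exact (hwr _).1 h
      · intro h; exact ⟨rfl, (hwr _).2 h⟩
    have hcondb : ∀ q ∈ Φ, (sameSide (emap q).1 (emap q).2 ∧ numMin (emap q) ∈ S.blacks)
        ↔ q.1 ∈ Bc := by
      intro q hq
      have hmin : numMin (emap q) = Sum.inr q.1 := by
        rw [emap, numMin, if_neg]
        exact not_le.2 (hΦ.lt q hq)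
      rw [hmin]
      constructor
      · rintro ⟨-, h⟩; exact (hbr _).1 h
      · intro h; exact ⟨rfl, (hbr _).2 h⟩
    have hcrossW : (Finset.univ.image cross).filter
        (fun p => sameSide p.1 p.2 ∧ numMin p ∈ S.whites) = ∅ := by
      apply Finset.filter_false_of_mem
      intro p hp
      obtain ⟨i, -, rfl⟩ := Finset.mem_image.1 hp
      rintro ⟨hc, -⟩
      simp [hcrossdef, sameSide] at hc
    have hcrossB : (Finset.univ.image cross).filter
        (fun p => sameSide p.1 p.2 ∧ numMin p ∈ S.blacks) = ∅ := by
      apply Finset.filter_false_of_mem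
      intro p hp
      obtain ⟨i, -, rfl⟩ := Finset.mem_image.1 hp
      rintro ⟨hc, -⟩
      simp [hcrossdef, sameSide] at hc
    have harcW : (Φ.image emap).filter (fun p => sameSide p.1 p.2 ∧ numMin p ∈ S.whites)
        = (Φ.filter (fun q => q.1 ∈ Wc)).image emap := by
      ext p
      simp only [Finset.mem_filter, Finset.mem_image]
      constructor
      · rintro ⟨⟨q, hq, rfl⟩, hc⟩
        exact ⟨q, ⟨hq, (hcond q hq).1 hc⟩, rfl⟩
      · rintro ⟨q, ⟨hq, hc⟩, rfl⟩
        exact ⟨⟨q, hq, rfl⟩, (hcond q hq).2 hc⟩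
    have harcB : (Φ.image emap).filter (fun p => sameSide p.1 p.2 ∧ numMin p ∈ S.blacks)
        = (Φ.filter (fun q => q.1 ∈ Bc)).image emap := by
      ext p
      simp only [Finset.mem_filter, Finset.mem_image]
      constructor
      · rintro ⟨⟨q, hq, rfl⟩, hc⟩
        exact ⟨q, ⟨hq, (hcondb q hq).1 hc⟩, rfl⟩
      · rintro ⟨q, ⟨hq, hc⟩, rfl⟩
        exact ⟨⟨q, hq, rfl⟩, (hcondb q hq).2 hc⟩
    have hzw : zetaWhite S M = (Φ.filter (fun q => q.1 ∈ Wc)).card := by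
      rw [zetaWhite, hMdef2, Finset.filter_union, hcrossW, Finset.empty_union, harcW,
        Finset.card_image_of_injective _ emap_inj]
    have hzb : zetaBlack S M = (Φ.filter (fun q => q.1 ∈ Bc)).card := by
      rw [zetaBlack, hMdef2, Finset.filter_union, hcrossB, Finset.empty_union, harcB,
        Finset.card_image_of_injective _ emap_inj]
    have hbc : Φ.filter (fun q => q.1 ∈ Bc) = Φ.filter (fun q => q.1 ∉ Wc) := by
      apply Finset.filter_congr
      intro q hq
      rcases hΦ.colors q hq with ⟨h1, -⟩ | ⟨h1, -⟩
      · simp [Finset.disjoint_left.1 hd h1, h1]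
      · simp [h1, Finset.disjoint_right.1 hd h1]
    rw [hzw, hzb, hbc, zetaA]

end NC
namespace NC
open Finset

/-- Failure of the splitting condition yields the pattern `y < x < y`. -/
lemma not_sep {X Y : Finset ℕ} (hd : Disjoint X Y)
    (h : ¬ ∃ X₁ X₂ : Finset ℕ, Disjoint X₁ X₂ ∧ X₁ ∪ X₂ = X ∧
      finsetLT X₁ Y ∧ finsetLT Y X₂) :
    PW Y X := by
  by_contra hP
  apply h
  refine ⟨X.filter (fun x => ∀ y ∈ Y, x < y), X.filter (fun x => ¬ ∀ y ∈ Y, x < y),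
    Finset.disjoint_filter_filter_not X X _, Finset.filter_union_filter_not_eq _ X, ?_, ?_⟩
  · intro a ha b hb
    exact (Finset.mem_filter.1 ha).2 b hb
  · intro y hy x hx
    obtain ⟨hxX, hnx⟩ := Finset.mem_filter.1 hx
    push_neg at hnx
    obtain ⟨y0, hy0, hy0x⟩ := hnx
    have hy0lt : y0 < x := lt_of_le_of_ne hy0x
      (fun hc => Finset.disjoint_left.1 hd hxX (hc ▸ hy0))
    by_contra hyx
    have hxy : x < y := lt_of_le_of_ne (not_lt.1 hyx)
      (fun hc => Finset.disjoint_left.1 hd hxX (hc ▸ hy))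
    exact hP ⟨y0, hy0, x, hxX, y, hy, hy0lt, hxy⟩

end NC

/-- If `I, J` are not weakly separated, the flag cortege `(A|I, B|J)` admits two
feasible matchings with different values of `ζ° - ζ•`. -/
theorem exists_two_matchings_of_not_weaklySeparated
    {m n : ℕ} (I J : Finset ℕ)
    (hIn : I ⊆ Finset.Icc 1 n) (hJn : J ⊆ Finset.Icc 1 n)
    (hJI : J.card ≤ I.card) (hws : ¬ WeaklySeparated I J) (hm : I.card ≤ m) :
    ∃ M M' : Finset (Elt × Elt),
      IsFeasible (flagCortege m n I J hIn hJn hJI hm) M ∧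
      IsFeasible (flagCortege m n I J hIn hJn hJI hm) M' ∧
      (zetaWhite (flagCortege m n I J hIn hJn hJI hm) M : ℤ) -
          (zetaBlack (flagCortege m n I J hIn hJn hJI hm) M : ℤ) ≠
        (zetaWhite (flagCortege m n I J hIn hJn hJI hm) M' : ℤ) -
          (zetaBlack (flagCortege m n I J hIn hJn hJI hm) M' : ℤ) := by
  have hnw1 : ¬ WShalf I J := fun h => hws (Or.inl h)
  have hnw2 : ¬ WShalf J I := fun h => hws (Or.inr h)
  set Wc := I \ J with hWcdef
  set Bc := J \ I with hBcdef
  set Wr := Finset.Icc 1 I.card \ Finset.Icc 1 J.card with hWrdef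
  have hd : Disjoint Wc Bc := by
    rw [Finset.disjoint_left]
    intro x hx hx'
    rw [hWcdef, Finset.mem_sdiff] at hx
    rw [hBcdef, Finset.mem_sdiff] at hx'
    exact hx'.2 hx.1
  have hdBA : Disjoint Bc Wc := hd.symm
  have h1 := Finset.card_sdiff_add_card_inter I J
  have h2 := Finset.card_sdiff_add_card_inter J I
  have h3 : (I ∩ J).card = (J ∩ I).card := by rw [Finset.inter_comm]
  have hWr : Wr.card = I.card - J.card := by
    rw [hWrdef, Finset.card_sdiff_of_subset (Finset.Icc_subset_Icc le_rfl hJI)]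
    simp
  have hcards : Wc.card = Bc.card + Wr.card := by
    rw [hWcdef, hBcdef, hWr]
    have hIJle : (I ∩ J).card ≤ J.card :=
      Finset.card_le_card Finset.inter_subset_right
    omega
  have hc : Bc.card ≤ Wc.card := by omega
  have hPW : NC.PW Wc Bc := by
    apply NC.not_sep hdBA
    intro hsplit
    exact hnw1 ⟨hJI, hsplit⟩
  have hside : Bc.card < Wc.card ∨ NC.PW Bc Wc := by
    by_cases hIJcard : I.card ≤ J.card
    · refine Or.inr ?_
      apply NC.not_sep hd
      intro hsplit
      exact hnw2 ⟨hIJcard, hsplit⟩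
    · left
      omega
  obtain ⟨Φ, Φ', hfΦ, hfΦ', hza⟩ := NC.two_feas hd hc hPW hside
  set S := flagCortege m n I J hIn hJn hJI hm with hSdef
  have hbempty : Finset.Icc 1 J.card \ Finset.Icc 1 I.card = ∅ :=
    Finset.sdiff_eq_empty_iff_subset.2 (Finset.Icc_subset_Icc le_rfl hJI)
  have hw : S.whites = Wr.image Sum.inl ∪ Wc.image Sum.inr := by
    simp [hSdef, flagCortege, Cortege.whites, hWrdef, hWcdef]
  have hb : S.blacks = Bc.image Sum.inr := by
    simp [hSdef, flagCortege, Cortege.blacks, hbempty, hBcdef]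
  obtain ⟨M, hM, hzM⟩ := NC.translate S Wr Wc Bc hw hb hd hcards Φ hfΦ
  obtain ⟨M', hM', hzM'⟩ := NC.translate S Wr Wc Bc hw hb hd hcards Φ' hfΦ'
  exact ⟨M, M', hM, hM', by rw [hzM, hzM']; exact hza⟩
end
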